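/- arXiv:2603.05239 — 2 statements merged into one kernel-verified Lean document; each statement's English description precedes it below -/
import Mathlib

section
/- Under the noisy-data setup (true system in difference-operator form with l at least its lag, data consistent with some noise V* ∈ 𝒱, Q ≺ 0, and the matrix [[Q̄, S̄],[S̄ᵀ, R̄]] invertible): if there exist a symmetric positive semidefinite P ∈ ℝ^{2ml×2ml} and μ ≥ 0 such that Gᵀ·diag(−P, P, ζ²I_m, −I_m)·G − μ·[[Q̃, S̃],[S̃ᵀ, R̃]] ⪯ 0, then lim_{τ→∞} γ₋(T^τ) ≥ ζ, where T^τ are the truncated input-output operators of the true noise-free system. -/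
open scoped ENNReal
open Filter Matrix Topology

noncomputable section

abbrev Evec (m : ℕ) := EuclideanSpace ℂ (Fin m)

/-- Action of a real matrix on a complex Euclidean vector. -/
noncomputable def act {a b : ℕ} (M : Matrix (Fin a) (Fin b) ℝ) (v : Evec b) : Evec a :=
  Matrix.toEuclideanLin (M.map Complex.ofReal) v

/-- Output of the discrete-time system with zero initial state. -/
noncomputable def output {n m : ℕ} (A : Matrix (Fin n) (Fin n) ℝ) (B : Matrix (Fin n) (Fin m) ℝ)
    (C : Matrix (Fin m) (Fin n) ℝ) (D : Matrix (Fin m) (Fin m) ℝ)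
    (u : ℕ → Evec m) (k : ℕ) : Evec m :=
  act D (u k) + ∑ i ∈ Finset.range k, act (C * A ^ (k - 1 - i) * B) (u i)

/-- ℓ₂ norm of a sequence, valued in [0,∞]. -/
noncomputable def enorm2 {m : ℕ} (f : ℕ → Evec m) : ℝ≥0∞ :=
  (∑' k, (‖f k‖₊ : ℝ≥0∞) ^ 2) ^ (1/2 : ℝ)

noncomputable def norm2 {m : ℕ} (f : ℕ → Evec m) : ℝ := (enorm2 f).toReal

noncomputable def inner2 {m : ℕ} (f g : ℕ → Evec m) : ℂ := ∑' k, (inner ℂ (f k) (g k) : ℂ)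

noncomputable def sangle {m : ℕ} (u y : ℕ → Evec m) : ℝ :=
  open scoped Classical in
  if y = 0 then 0 else Real.arccos ((inner2 y u).re / (norm2 y * norm2 u))

noncomputable def srg {m : ℕ} (dom : Set (ℕ → Evec m))
    (T : (ℕ → Evec m) → (ℕ → Evec m)) : Set ℂ :=
  {w | ∃ u ∈ dom, u ≠ 0 ∧
    (w = ((norm2 (T u) / norm2 u : ℝ) : ℂ) * Complex.exp ((sangle u (T u) : ℂ) * Complex.I) ∨
     w = ((norm2 (T u) / norm2 u : ℝ) : ℂ) * Complex.exp (-(sangle u (T u) : ℂ) * Complex.I))}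

noncomputable def maxGain {m : ℕ} (dom : Set (ℕ → Evec m))
    (T : (ℕ → Evec m) → (ℕ → Evec m)) : ℝ≥0∞ :=
  ⨆ u ∈ {v ∈ dom | v ≠ 0}, enorm2 (T u) / enorm2 u

noncomputable def minGain {m : ℕ} (dom : Set (ℕ → Evec m))
    (T : (ℕ → Evec m) → (ℕ → Evec m)) : ℝ≥0∞ :=
  ⨅ u ∈ {v ∈ dom | v ≠ 0}, enorm2 (T u) / enorm2 u

/-- The subspace ℓ_{2,τ}: sequences vanishing strictly after time τ. -/
def ltwoTau (m τ : ℕ) : Set (ℕ → Evec m) := {u | ∀ k, τ < k → u k = 0}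

/-- The truncated operator T^τ. -/
noncomputable def TtauMap {n m : ℕ} (A : Matrix (Fin n) (Fin n) ℝ) (B : Matrix (Fin n) (Fin m) ℝ)
    (C : Matrix (Fin m) (Fin n) ℝ) (D : Matrix (Fin m) (Fin m) ℝ) (τ : ℕ)
    (u : ℕ → Evec m) (k : ℕ) : Evec m :=
  if k ≤ τ then output A B C D u k else 0

/-- Domain of the ℓ₂ operator T. -/
def domInf {n m : ℕ} (A : Matrix (Fin n) (Fin n) ℝ) (B : Matrix (Fin n) (Fin m) ℝ)
    (C : Matrix (Fin m) (Fin n) ℝ) (D : Matrix (Fin m) (Fin m) ℝ) : Set (ℕ → Evec m) :=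
  {u | enorm2 u ≠ ⊤ ∧ enorm2 (output A B C D u) ≠ ⊤}

/-- Limit of a sequence of subsets of a topological space. -/
def setLimit {X : Type*} [TopologicalSpace X] (S : ℕ → Set X) : Set X :=
  {x | ∃ z : ℕ → X, (∀ τ, z τ ∈ S τ) ∧ Tendsto z atTop (𝓝 x)}

/-- The (possibly unbounded) annulus centred at α with radii lo ≤ hi, as a subset of Ĉ. -/
def annulus (α : ℝ) (lo hi : ℝ≥0∞) : Set (OnePoint ℂ) :=
  {w | (w = OnePoint.infty ∧ hi = ⊤) ∨
    ∃ z : ℂ, w = (((α : ℂ) + z : ℂ) : OnePoint ℂ) ∧ lo ≤ (‖z‖₊ : ℝ≥0∞) ∧ (‖z‖₊ : ℝ≥0∞) ≤ hi}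




/-- A real matrix is negative semidefinite: symmetric and xᵀMx ≤ 0 for all x. -/
def IsNegSemidef {k : Type*} [Fintype k] (M : Matrix k k ℝ) : Prop :=
  M.IsSymm ∧ ∀ x : k → ℝ, x ⬝ᵥ M.mulVec x ≤ 0

/-- A real matrix is positive semidefinite: symmetric and xᵀMx ≥ 0 for all x. -/
def IsPosSemidefR {k : Type*} [Fintype k] (M : Matrix k k ℝ) : Prop :=
  M.IsSymm ∧ ∀ x : k → ℝ, 0 ≤ x ⬝ᵥ M.mulVec x

/-- A real matrix is negative definite. -/
def IsNegDef {k : Type*} [Fintype k] (M : Matrix k k ℝ) : Prop :=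
  M.IsSymm ∧ ∀ x : k → ℝ, x ≠ 0 → x ⬝ᵥ M.mulVec x < 0

/-- (A,B) is controllable: the controllability matrix has full rank n. -/
def Controllable {n m : ℕ} (A : Matrix (Fin n) (Fin n) ℝ) (B : Matrix (Fin n) (Fin m) ℝ) : Prop :=
  (Matrix.of fun i (p : Fin n × Fin m) => (A ^ (p.1 : ℕ) * B) i p.2).rank = n

/-- The observability matrix of depth l (rows C, CA, …, CA^{l-1}). -/
def obsMat {n m : ℕ} (A : Matrix (Fin n) (Fin n) ℝ) (C : Matrix (Fin m) (Fin n) ℝ) (l : ℕ) :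
    Matrix (Fin l × Fin m) (Fin n) ℝ :=
  Matrix.of fun p j => (C * A ^ (p.1 : ℕ)) p.2 j

/-- (A,C) is observable: the depth-n observability matrix has full rank n. -/
def Observable {n m : ℕ} (A : Matrix (Fin n) (Fin n) ℝ) (C : Matrix (Fin m) (Fin n) ℝ) : Prop :=
  (obsMat A C n).rank = n

/-- The lag of the system: smallest l ≥ 1 with full-rank observability matrix of depth l. -/
noncomputable def lag {n m : ℕ} (A : Matrix (Fin n) (Fin n) ℝ) (C : Matrix (Fin m) (Fin n) ℝ) : ℕ :=
  sInf {l | 1 ≤ l ∧ (obsMat A C l).rank = n}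

/-- The LMI matrix for the maximum gain. -/
def lmiMax {n m : ℕ} (A : Matrix (Fin n) (Fin n) ℝ) (B : Matrix (Fin n) (Fin m) ℝ)
    (C : Matrix (Fin m) (Fin n) ℝ) (D : Matrix (Fin m) (Fin m) ℝ)
    (P : Matrix (Fin n) (Fin n) ℝ) (γ : ℝ) : Matrix (Fin n ⊕ Fin m) (Fin n ⊕ Fin m) ℝ :=
  Matrix.fromBlocks (Aᵀ * P * A - P + Cᵀ * C) (Aᵀ * P * B + Cᵀ * D)
    (Bᵀ * P * A + Dᵀ * C) (Bᵀ * P * B + Dᵀ * D - γ ^ 2 • (1 : Matrix (Fin m) (Fin m) ℝ))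

/-- The LMI matrix for the minimum gain. -/
def lmiMin {n m : ℕ} (A : Matrix (Fin n) (Fin n) ℝ) (B : Matrix (Fin n) (Fin m) ℝ)
    (C : Matrix (Fin m) (Fin n) ℝ) (D : Matrix (Fin m) (Fin m) ℝ)
    (P : Matrix (Fin n) (Fin n) ℝ) (ζ : ℝ) : Matrix (Fin n ⊕ Fin m) (Fin n ⊕ Fin m) ℝ :=
  Matrix.fromBlocks (Aᵀ * P * A - P - Cᵀ * C) (Aᵀ * P * B - Cᵀ * D)
    (Bᵀ * P * A - Dᵀ * C) (Bᵀ * P * B - Dᵀ * D + ζ ^ 2 • (1 : Matrix (Fin m) (Fin m) ℝ))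

/-- Persistency of excitation of order L of the input data (u_k)_{k=0}^{N-1}. -/
def PersistentlyExciting (m N L : ℕ) (u : ℕ → Fin m → ℝ) : Prop :=
  (Matrix.of fun (p : Fin L × Fin m) (j : Fin (N - L + 1)) => u ((p.1 : ℕ) + (j : ℕ)) p.2).rank
    = m * L

/-- (u,y) is an input-output trajectory of (A,B,C,D) of length N. -/
def IsTrajectory {n m : ℕ} (A : Matrix (Fin n) (Fin n) ℝ) (B : Matrix (Fin n) (Fin m) ℝ)
    (C : Matrix (Fin m) (Fin n) ℝ) (D : Matrix (Fin m) (Fin m) ℝ) (N : ℕ)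
    (u y : ℕ → Fin m → ℝ) : Prop :=
  ∃ x : ℕ → Fin n → ℝ, ∀ k < N,
    x (k + 1) = A.mulVec (x k) + B.mulVec (u k) ∧ y k = C.mulVec (x k) + D.mulVec (u k)

/-- Index type for the extended state ξ (u-block followed by y-block). -/
abbrev rindex (l m : ℕ) := (Fin l × Fin m) ⊕ (Fin l × Fin m)

/-- The extended state ξ_k = (u_{k-l}, …, u_{k-1}, y_{k-l}, …, y_{k-1}). -/
def xi {m : ℕ} (l : ℕ) (u y : ℕ → Fin m → ℝ) (k : ℕ) : rindex l m → ℝ :=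
  Sum.elim (fun p => u (k - l + (p.1 : ℕ)) p.2) (fun p => y (k - l + (p.1 : ℕ)) p.2)

def XiMat {m : ℕ} (l N : ℕ) (u y : ℕ → Fin m → ℝ) : Matrix (rindex l m) (Fin (N - l)) ℝ :=
  Matrix.of fun r j => xi l u y (l + (j : ℕ)) r

def XiPlus {m : ℕ} (l N : ℕ) (u y : ℕ → Fin m → ℝ) : Matrix (rindex l m) (Fin (N - l)) ℝ :=
  Matrix.of fun r j => xi l u y (l + 1 + (j : ℕ)) r

def UXi (m l N : ℕ) (u : ℕ → Fin m → ℝ) : Matrix (Fin m) (Fin (N - l)) ℝ :=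
  Matrix.of fun a j => u (l + (j : ℕ)) a

/-- Membership of a noise matrix V in the noise set 𝒱. -/
def inNoiseSet {r mv : ℕ} (Q : Matrix (Fin r) (Fin r) ℝ) (S : Matrix (Fin r) (Fin mv) ℝ)
    (R : Matrix (Fin mv) (Fin mv) ℝ) (V : Matrix (Fin mv) (Fin r) ℝ) : Prop :=
  IsPosSemidefR ((Matrix.fromRows Vᵀ (1 : Matrix (Fin mv) (Fin mv) ℝ))ᵀ
    * Matrix.fromBlocks Q S Sᵀ R * Matrix.fromRows Vᵀ (1 : Matrix (Fin mv) (Fin mv) ℝ))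

/-- The data matrix M = [[(Ξ; U_Ξ), 0], [Y_Ξ, I]]. -/
def Mdata {m : ℕ} (l N : ℕ) (u y : ℕ → Fin m → ℝ) :
    Matrix ((rindex l m ⊕ Fin m) ⊕ Fin m) (Fin (N - l) ⊕ Fin m) ℝ :=
  Matrix.fromBlocks (Matrix.fromRows (XiMat l N u y) (UXi m l N u)) 0 (UXi m l N y) 1

/-- The noise-weight matrix W = [[Q, S Bᵥᵀ], [Bᵥ Sᵀ, Bᵥ R Bᵥᵀ]]. -/
def Wmat {r m mv : ℕ} (Q : Matrix (Fin r) (Fin r) ℝ) (S : Matrix (Fin r) (Fin mv) ℝ)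
    (R : Matrix (Fin mv) (Fin mv) ℝ) (Bv : Matrix (Fin m) (Fin mv) ℝ) :
    Matrix (Fin r ⊕ Fin m) (Fin r ⊕ Fin m) ℝ :=
  Matrix.fromBlocks Q (S * Bvᵀ) (Bv * Sᵀ) (Bv * R * Bvᵀ)

/-- The matrix [[Q̄, S̄], [S̄ᵀ, R̄]] = M W Mᵀ. -/
def QSRbar {m mv : ℕ} (l N : ℕ) (u y : ℕ → Fin m → ℝ)
    (Q : Matrix (Fin (N - l)) (Fin (N - l)) ℝ) (S : Matrix (Fin (N - l)) (Fin mv) ℝ)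
    (R : Matrix (Fin mv) (Fin mv) ℝ) (Bv : Matrix (Fin m) (Fin mv) ℝ) :
    Matrix ((rindex l m ⊕ Fin m) ⊕ Fin m) ((rindex l m ⊕ Fin m) ⊕ Fin m) ℝ :=
  Mdata l N u y * Wmat Q S R Bv * (Mdata l N u y)ᵀ

/-- The second block row ((Ã; 0), (B̃; 0), (0; I)) of the matrix G, where Ã, B̃ are the
block-shift matrices of the difference-operator representation: it maps (ξ, u, w) to the
vector ξ₊ whose u-block and y-block are shifted, with u in the slot for `u_k` and w in the
slot for `y_k`. -/
def Kshift (l m : ℕ) : Matrix (rindex l m) ((rindex l m ⊕ Fin m) ⊕ Fin m) ℝ :=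
  Matrix.of fun r c =>
    match r, c with
    | .inl (i, a), .inl (.inl (.inl (i', a'))) =>
        if (i : ℕ) + 1 = (i' : ℕ) ∧ a = a' then 1 else 0
    | .inl (i, a), .inl (.inr a') => if (i : ℕ) + 1 = l ∧ a = a' then 1 else 0
    | .inr (i, a), .inl (.inl (.inr (i', a'))) =>
        if (i : ℕ) + 1 = (i' : ℕ) ∧ a = a' then 1 else 0
    | .inr (i, a), .inr a' => if (i : ℕ) + 1 = l ∧ a = a' then 1 else 0
    | _, _ => 0

/-- The matrix G with block rows (I,0,0), ((Ã;0),(B̃;0),(0;I)), (0,I,0), (0,0,I). -/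
def Gmat (l m : ℕ) :
    Matrix ((rindex l m ⊕ rindex l m) ⊕ (Fin m ⊕ Fin m)) ((rindex l m ⊕ Fin m) ⊕ Fin m) ℝ :=
  Matrix.fromRows
    (Matrix.fromRows
      (Matrix.fromCols (Matrix.fromCols 1 0) 0)
      (Kshift l m))
    (Matrix.fromRows
      (Matrix.fromCols (Matrix.fromCols 0 1) 0)
      (Matrix.fromCols (Matrix.fromCols 0 0) 1))

/-- The block-diagonal multiplier diag(−P, P, Λ, Ψ). -/
def PhiMat {l m : ℕ} (P : Matrix (rindex l m) (rindex l m) ℝ) (Λ Ψ : Matrix (Fin m) (Fin m) ℝ) :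
    Matrix ((rindex l m ⊕ rindex l m) ⊕ (Fin m ⊕ Fin m))
      ((rindex l m ⊕ rindex l m) ⊕ (Fin m ⊕ Fin m)) ℝ :=
  Matrix.fromBlocks (Matrix.fromBlocks (-P) 0 0 P) 0 0 (Matrix.fromBlocks Λ 0 0 Ψ)

lemma dual_lemma {p q : Type*} [Fintype p] [Fintype q]
    (N : Matrix (p ⊕ q) (p ⊕ q) ℝ) (hsym : N.IsSymm)
    (K : Matrix q p ℝ)
    (hQ : ∀ c : p → ℝ, Sum.elim c 0 ⬝ᵥ N *ᵥ Sum.elim c 0 ≤ 0)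
    (hpos : ∀ z : q → ℝ, 0 ≤ Sum.elim (-(z ᵥ* K)) z ⬝ᵥ N *ᵥ Sum.elim (-(z ᵥ* K)) z)
    (d : p ⊕ q → ℝ)
    (hker : ∀ z : q → ℝ, Sum.elim (-(z ᵥ* K)) z ⬝ᵥ (N *ᵥ d) = 0) :
    d ⬝ᵥ N *ᵥ d ≤ 0 := by
  have hbil : ∀ x y : p ⊕ q → ℝ, x ⬝ᵥ N *ᵥ y = y ⬝ᵥ N *ᵥ x := by
    intro x y
    conv_lhs => rw [dotProduct_mulVec, ← mulVec_transpose, hsym.eq, dotProduct_comm]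
  set d₂ : q → ℝ := fun a => d (Sum.inr a) with hd₂
  set L₂ : p ⊕ q → ℝ := Sum.elim (-(d₂ ᵥ* K)) d₂ with hL₂
  set e : p → ℝ := fun i => d (Sum.inl i) + (d₂ ᵥ* K) i with he
  set c1 : p ⊕ q → ℝ := Sum.elim e 0 with hc1
  have hdec : d = c1 + L₂ := by
    funext r; cases r with
    | inl i => simp [hc1, he, hL₂]
    | inr a => simp [hc1, hL₂, hd₂]
  have expand : (c1 + L₂) ⬝ᵥ N *ᵥ (c1 + L₂)
      = c1 ⬝ᵥ N *ᵥ c1 + c1 ⬝ᵥ N *ᵥ L₂ + L₂ ⬝ᵥ N *ᵥ c1 + L₂ ⬝ᵥ N *ᵥ L₂ := by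
    simp only [mulVec_add, dotProduct_add, add_dotProduct]; ring
  have hk : L₂ ⬝ᵥ N *ᵥ d = 0 := hker d₂
  have hk2 : L₂ ⬝ᵥ N *ᵥ c1 + L₂ ⬝ᵥ N *ᵥ L₂ = 0 := by
    rw [← dotProduct_add, ← mulVec_add, ← hdec]; exact hk
  have h12 : c1 ⬝ᵥ N *ᵥ L₂ = L₂ ⬝ᵥ N *ᵥ c1 := hbil c1 L₂
  have h1 := hQ e
  have h2 := hpos d₂
  rw [← hc1] at h1
  rw [← hL₂] at h2
  rw [hdec, expand]
  linarith [h1, h2]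

/-- Conjugation of a quadratic form: x ⬝ᵥ (M W Mᵀ) x = (Mᵀx) ⬝ᵥ W (Mᵀx). -/
lemma conj_quad {a b : Type*} [Fintype a] [Fintype b]
    (M : Matrix a b ℝ) (W : Matrix b b ℝ) (x : a → ℝ) :
    x ⬝ᵥ (M * W * Mᵀ) *ᵥ x = (Mᵀ *ᵥ x) ⬝ᵥ W *ᵥ (Mᵀ *ᵥ x) := by
  rw [← Matrix.mulVec_mulVec, ← Matrix.mulVec_mulVec, Matrix.dotProduct_mulVec,
    ← Matrix.mulVec_transpose]

lemma conj_quad' {a b : Type*} [Fintype a] [Fintype b]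
    (G : Matrix a b ℝ) (W : Matrix a a ℝ) (x : b → ℝ) :
    x ⬝ᵥ (Gᵀ * W * G) *ᵥ x = (G *ᵥ x) ⬝ᵥ W *ᵥ (G *ᵥ x) := by
  have := conj_quad Gᵀ W x
  rwa [Matrix.transpose_transpose] at this

lemma kshift_mulVec (l m : ℕ) (ξ : rindex l m → ℝ) (uu yy : Fin m → ℝ) :
    Kshift l m *ᵥ Sum.elim (Sum.elim ξ uu) yy =
      Sum.elim
        (fun p : Fin l × Fin m =>
          if h : (p.1 : ℕ) + 1 < l then ξ (Sum.inl (⟨(p.1 : ℕ) + 1, h⟩, p.2)) else uu p.2)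
        (fun p : Fin l × Fin m =>
          if h : (p.1 : ℕ) + 1 < l then ξ (Sum.inr (⟨(p.1 : ℕ) + 1, h⟩, p.2)) else yy p.2) := by
  funext r
  have hsplit : ∀ x : ((rindex l m ⊕ Fin m) ⊕ Fin m) → ℝ,
      (Kshift l m *ᵥ x) r =
        (∑ p' : Fin l × Fin m, Kshift l m r (Sum.inl (Sum.inl (Sum.inl p'))) * x (Sum.inl (Sum.inl (Sum.inl p'))))
        + (∑ p' : Fin l × Fin m, Kshift l m r (Sum.inl (Sum.inl (Sum.inr p'))) * x (Sum.inl (Sum.inl (Sum.inr p'))))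
        + (∑ a' : Fin m, Kshift l m r (Sum.inl (Sum.inr a')) * x (Sum.inl (Sum.inr a')))
        + (∑ a' : Fin m, Kshift l m r (Sum.inr a') * x (Sum.inr a')) := by
    intro x
    show (∑ c, Kshift l m r c * x c) = _
    rw [Fintype.sum_sum_type, Fintype.sum_sum_type, Fintype.sum_sum_type]
  cases r with
  | inl p =>
    obtain ⟨i, a⟩ := p
    rw [hsplit]
    have h2 : (∑ p' : Fin l × Fin m,
        Kshift l m (Sum.inl (i, a)) (Sum.inl (Sum.inl (Sum.inr p'))) *
          Sum.elim (Sum.elim ξ uu) yy (Sum.inl (Sum.inl (Sum.inr p')))) = 0 := by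
      apply Finset.sum_eq_zero; intro p' _; simp [Kshift]
    have h4 : (∑ a' : Fin m,
        Kshift l m (Sum.inl (i, a)) (Sum.inr a') *
          Sum.elim (Sum.elim ξ uu) yy (Sum.inr a')) = 0 := by
      apply Finset.sum_eq_zero; intro a' _; simp [Kshift]
    rw [h2, h4, add_zero, add_zero]
    by_cases h : (i : ℕ) + 1 < l
    · have h1 : (∑ p' : Fin l × Fin m,
          Kshift l m (Sum.inl (i, a)) (Sum.inl (Sum.inl (Sum.inl p'))) *
            Sum.elim (Sum.elim ξ uu) yy (Sum.inl (Sum.inl (Sum.inl p')))) =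
          ξ (Sum.inl (⟨(i : ℕ) + 1, h⟩, a)) := by
        rw [Finset.sum_eq_single ((⟨(i : ℕ) + 1, h⟩ : Fin l), a)]
        · simp [Kshift]
        · intro b _ hb
          have : ¬ ((i : ℕ) + 1 = (b.1 : ℕ) ∧ a = b.2) := by
            rintro ⟨hb1, hb2⟩
            exact hb (by apply Prod.ext <;> simp [← hb2, Fin.ext_iff, ← hb1])
          simp [Kshift, this]
        · intro hmem; exact absurd (Finset.mem_univ _) hmem
      have h3 : (∑ a' : Fin m,
          Kshift l m (Sum.inl (i, a)) (Sum.inl (Sum.inr a')) *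
            Sum.elim (Sum.elim ξ uu) yy (Sum.inl (Sum.inr a'))) = 0 := by
        apply Finset.sum_eq_zero; intro a' _
        have : ¬ ((i : ℕ) + 1 = l ∧ a = a') := by rintro ⟨h1, -⟩; omega
        simp [Kshift, this]
      rw [h1, h3, add_zero]
      simp [h]
    · have hil : (i : ℕ) + 1 = l := by have := i.2; omega
      have h1 : (∑ p' : Fin l × Fin m,
          Kshift l m (Sum.inl (i, a)) (Sum.inl (Sum.inl (Sum.inl p'))) *
            Sum.elim (Sum.elim ξ uu) yy (Sum.inl (Sum.inl (Sum.inl p')))) = 0 := by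
        apply Finset.sum_eq_zero; intro p' _
        have : ¬ ((i : ℕ) + 1 = (p'.1 : ℕ) ∧ a = p'.2) := by
          rintro ⟨h1, -⟩; have := p'.1.2; omega
        simp [Kshift, this]
      have h3 : (∑ a' : Fin m,
          Kshift l m (Sum.inl (i, a)) (Sum.inl (Sum.inr a')) *
            Sum.elim (Sum.elim ξ uu) yy (Sum.inl (Sum.inr a'))) = uu a := by
        rw [Finset.sum_eq_single a]
        · simp [Kshift, hil]
        · intro b _ hb
          have : ¬ ((i : ℕ) + 1 = l ∧ a = b) := by rintro ⟨-, h2⟩; exact hb h2.symm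
          simp [Kshift, this]
        · intro hmem; exact absurd (Finset.mem_univ _) hmem
      rw [h1, h3, zero_add]
      simp [h]
  | inr p =>
    obtain ⟨i, a⟩ := p
    rw [hsplit]
    have h1 : (∑ p' : Fin l × Fin m,
        Kshift l m (Sum.inr (i, a)) (Sum.inl (Sum.inl (Sum.inl p'))) *
          Sum.elim (Sum.elim ξ uu) yy (Sum.inl (Sum.inl (Sum.inl p')))) = 0 := by
      apply Finset.sum_eq_zero; intro p' _; simp [Kshift]
    have h3 : (∑ a' : Fin m,
        Kshift l m (Sum.inr (i, a)) (Sum.inl (Sum.inr a')) *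
          Sum.elim (Sum.elim ξ uu) yy (Sum.inl (Sum.inr a'))) = 0 := by
      apply Finset.sum_eq_zero; intro a' _; simp [Kshift]
    rw [h1, h3, zero_add, add_zero]
    by_cases h : (i : ℕ) + 1 < l
    · have h2 : (∑ p' : Fin l × Fin m,
          Kshift l m (Sum.inr (i, a)) (Sum.inl (Sum.inl (Sum.inr p'))) *
            Sum.elim (Sum.elim ξ uu) yy (Sum.inl (Sum.inl (Sum.inr p')))) =
          ξ (Sum.inr (⟨(i : ℕ) + 1, h⟩, a)) := by
        rw [Finset.sum_eq_single ((⟨(i : ℕ) + 1, h⟩ : Fin l), a)]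
        · simp [Kshift]
        · intro b _ hb
          have : ¬ ((i : ℕ) + 1 = (b.1 : ℕ) ∧ a = b.2) := by
            rintro ⟨hb1, hb2⟩
            exact hb (by apply Prod.ext <;> simp [← hb2, Fin.ext_iff, ← hb1])
          simp [Kshift, this]
        · intro hmem; exact absurd (Finset.mem_univ _) hmem
      have h4 : (∑ a' : Fin m,
          Kshift l m (Sum.inr (i, a)) (Sum.inr a') *
            Sum.elim (Sum.elim ξ uu) yy (Sum.inr a')) = 0 := by
        apply Finset.sum_eq_zero; intro a' _
        have : ¬ ((i : ℕ) + 1 = l ∧ a = a') := by rintro ⟨h1, -⟩; omega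
        simp [Kshift, this]
      rw [h2, h4, add_zero]
      simp [h]
    · have hil : (i : ℕ) + 1 = l := by have := i.2; omega
      have h2 : (∑ p' : Fin l × Fin m,
          Kshift l m (Sum.inr (i, a)) (Sum.inl (Sum.inl (Sum.inr p'))) *
            Sum.elim (Sum.elim ξ uu) yy (Sum.inl (Sum.inl (Sum.inr p')))) = 0 := by
        apply Finset.sum_eq_zero; intro p' _
        have : ¬ ((i : ℕ) + 1 = (p'.1 : ℕ) ∧ a = p'.2) := by
          rintro ⟨h1, -⟩; have := p'.1.2; omega
        simp [Kshift, this]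
      have h4 : (∑ a' : Fin m,
          Kshift l m (Sum.inr (i, a)) (Sum.inr a') *
            Sum.elim (Sum.elim ξ uu) yy (Sum.inr a')) = yy a := by
        rw [Finset.sum_eq_single a]
        · simp [Kshift, hil]
        · intro b _ hb
          have : ¬ ((i : ℕ) + 1 = l ∧ a = b) := by rintro ⟨-, h2⟩; exact hb h2.symm
          simp [Kshift, this]
        · intro hmem; exact absurd (Finset.mem_univ _) hmem
      rw [h2, h4, zero_add]
      simp [h]

lemma gmat_mulVec (l m : ℕ) (ξ : rindex l m → ℝ) (uu yy : Fin m → ℝ) :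
    Gmat l m *ᵥ Sum.elim (Sum.elim ξ uu) yy =
      Sum.elim (Sum.elim ξ (Kshift l m *ᵥ Sum.elim (Sum.elim ξ uu) yy)) (Sum.elim uu yy) := by
  have e1 : (Matrix.fromCols (Matrix.fromCols (1 : Matrix (rindex l m) (rindex l m) ℝ) 0) 0)
      *ᵥ Sum.elim (Sum.elim ξ uu) yy = ξ := by
    rw [Matrix.fromCols_mulVec_sumElim, Matrix.fromCols_mulVec_sumElim]; simp
  have e3 : (Matrix.fromCols (Matrix.fromCols (0 : Matrix (Fin m) (rindex l m) ℝ) 1) 0)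
      *ᵥ Sum.elim (Sum.elim ξ uu) yy = uu := by
    rw [Matrix.fromCols_mulVec_sumElim, Matrix.fromCols_mulVec_sumElim]; simp
  have e4 : (Matrix.fromCols (Matrix.fromCols (0 : Matrix (Fin m) (rindex l m) ℝ) 0) 1)
      *ᵥ Sum.elim (Sum.elim ξ uu) yy = yy := by
    rw [Matrix.fromCols_mulVec_sumElim, Matrix.fromCols_mulVec_sumElim]; simp
  unfold Gmat
  rw [Matrix.fromRows_mulVec, Matrix.fromRows_mulVec, Matrix.fromRows_mulVec, e1, e3, e4]

lemma gphi_form {l m : ℕ} (P : Matrix (rindex l m) (rindex l m) ℝ)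
    (Λ Ψ : Matrix (Fin m) (Fin m) ℝ) (ξ : rindex l m → ℝ) (uu yy : Fin m → ℝ) :
    Sum.elim (Sum.elim ξ uu) yy ⬝ᵥ
        ((Gmat l m)ᵀ * PhiMat P Λ Ψ * Gmat l m) *ᵥ Sum.elim (Sum.elim ξ uu) yy =
      -(ξ ⬝ᵥ P *ᵥ ξ)
        + (Kshift l m *ᵥ Sum.elim (Sum.elim ξ uu) yy) ⬝ᵥ
            P *ᵥ (Kshift l m *ᵥ Sum.elim (Sum.elim ξ uu) yy)
        + uu ⬝ᵥ Λ *ᵥ uu + yy ⬝ᵥ Ψ *ᵥ yy := by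
  rw [conj_quad', gmat_mulVec]
  set ξp := Kshift l m *ᵥ Sum.elim (Sum.elim ξ uu) yy with hξp
  unfold PhiMat
  rw [Matrix.fromBlocks_mulVec]
  simp only [Sum.elim_comp_inl, Sum.elim_comp_inr, Matrix.zero_mulVec, add_zero, zero_add]
  rw [Matrix.fromBlocks_mulVec, Matrix.fromBlocks_mulVec]
  simp only [Sum.elim_comp_inl, Sum.elim_comp_inr, Matrix.zero_mulVec, add_zero, zero_add]
  rw [sumElim_dotProduct_sumElim, sumElim_dotProduct_sumElim,
    sumElim_dotProduct_sumElim, Matrix.neg_mulVec, dotProduct_neg]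
  ring

/-- Under the noisy-data hypotheses, any (extended state, input, output) triple that is
consistent with the true system parameters gives a nonpositive value of the quadratic form
with matrix `(QSRbar)⁻¹`. -/
lemma negform {m mv l N : ℕ} (u y : ℕ → Fin m → ℝ) (v : ℕ → Fin mv → ℝ)
    (Q : Matrix (Fin (N - l)) (Fin (N - l)) ℝ) (S : Matrix (Fin (N - l)) (Fin mv) ℝ)
    (R : Matrix (Fin mv) (Fin mv) ℝ) (Bv : Matrix (Fin m) (Fin mv) ℝ)
    (hQ : IsNegDef Q) (hR : R.IsSymm)
    (hV : inNoiseSet Q S R (Matrix.of fun a (j : Fin (N - l)) => v (l + (j : ℕ)) a))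
    (Kmat : Matrix (Fin m) (rindex l m ⊕ Fin m) ℝ)
    (hdataK : ∀ j : Fin (N - l), ∀ a : Fin m,
      y (l + (j : ℕ)) a =
        (Kmat *ᵥ Sum.elim (fun r => xi l u y (l + (j : ℕ)) r) (fun b => u (l + (j : ℕ)) b)) a
          + (Bv *ᵥ v (l + (j : ℕ))) a)
    (hinv : IsUnit (QSRbar l N u y Q S R Bv).det)
    (c : ((rindex l m ⊕ Fin m) ⊕ Fin m) → ℝ)
    (hc : ∀ a, c (Sum.inr a) = (Kmat *ᵥ fun i => c (Sum.inl i)) a) :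
    c ⬝ᵥ (QSRbar l N u y Q S R Bv)⁻¹ *ᵥ c ≤ 0 := by
  classical
  set Z : Matrix (rindex l m ⊕ Fin m) (Fin (N - l)) ℝ :=
    Matrix.fromRows (XiMat l N u y) (UXi m l N u) with hZ
  set Y : Matrix (Fin m) (Fin (N - l)) ℝ := UXi m l N y with hY
  set Vs : Matrix (Fin mv) (Fin (N - l)) ℝ :=
    Matrix.of fun a (j : Fin (N - l)) => v (l + (j : ℕ)) a with hVs
  set Nb := QSRbar l N u y Q S R Bv with hNb
  have hW : (Wmat Q S R Bv)ᵀ = Wmat Q S R Bv := by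
    unfold Wmat
    rw [Matrix.fromBlocks_transpose]
    rw [Matrix.transpose_mul, Matrix.transpose_mul, Matrix.transpose_mul, Matrix.transpose_mul,
      Matrix.transpose_transpose, Matrix.transpose_transpose, hQ.1.eq, hR.eq, Matrix.mul_assoc]
  have hsym : Nb.IsSymm := by
    unfold Matrix.IsSymm
    rw [hNb]
    unfold QSRbar
    rw [Matrix.transpose_mul, Matrix.transpose_mul, Matrix.transpose_transpose, hW,
      Matrix.mul_assoc]
  -- the transposed data matrix
  have hMT : (Mdata l N u y)ᵀ = Matrix.fromBlocks Zᵀ Yᵀ 0 1 := by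
    unfold Mdata
    rw [Matrix.fromBlocks_transpose, Matrix.transpose_zero, Matrix.transpose_one]
  -- quadratic form of Nb
  have hform : ∀ x : ((rindex l m ⊕ Fin m) ⊕ Fin m) → ℝ,
      x ⬝ᵥ Nb *ᵥ x = ((Mdata l N u y)ᵀ *ᵥ x) ⬝ᵥ Wmat Q S R Bv *ᵥ ((Mdata l N u y)ᵀ *ᵥ x) := by
    intro x; rw [hNb]; unfold QSRbar; exact conj_quad _ _ x
  -- negative semidefiniteness on the first block
  have hQbar : ∀ c' : (rindex l m ⊕ Fin m) → ℝ,
      Sum.elim c' 0 ⬝ᵥ Nb *ᵥ Sum.elim c' 0 ≤ 0 := by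
    intro c'
    rw [hform, hMT, Matrix.fromBlocks_mulVec]
    simp only [Sum.elim_comp_inl, Sum.elim_comp_inr, Matrix.mulVec_zero, Matrix.zero_mulVec,
      add_zero, zero_add, Matrix.one_mulVec]
    unfold Wmat
    rw [Matrix.fromBlocks_mulVec]
    simp only [Sum.elim_comp_inl, Sum.elim_comp_inr, Matrix.mulVec_zero, add_zero,
      sumElim_dotProduct_sumElim, zero_dotProduct]
    by_cases ha : (Zᵀ *ᵥ c') = 0
    · rw [ha]; simp
    · exact le_of_lt (hQ.2 _ ha)
  -- the key data identity: Y - K Z = Bv V*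
  have hKey : Y - Kmat * Z = Bv * Vs := by
    ext a j
    have h := hdataK j a
    have hcol : (fun r => Z r j) =
        Sum.elim (fun r => xi l u y (l + (j : ℕ)) r) (fun b => u (l + (j : ℕ)) b) := by
      funext r; cases r <;> rfl
    have h1 : (Kmat * Z) a j =
        (Kmat *ᵥ Sum.elim (fun r => xi l u y (l + (j : ℕ)) r) (fun b => u (l + (j : ℕ)) b)) a := by
      rw [← hcol]
      simp [Matrix.mul_apply, Matrix.mulVec, dotProduct]
    have h2 : (Bv * Vs) a j = (Bv *ᵥ v (l + (j : ℕ))) a := by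
      simp [Matrix.mul_apply, Matrix.mulVec, dotProduct, hVs]
    have h3 : Y a j = y (l + (j : ℕ)) a := rfl
    rw [Matrix.sub_apply, h1, h2, h3, h]
    ring
  -- positive semidefiniteness along the graph of Kmat
  have hpos : ∀ z : Fin m → ℝ,
      0 ≤ Sum.elim (-(z ᵥ* Kmat)) z ⬝ᵥ Nb *ᵥ Sum.elim (-(z ᵥ* Kmat)) z := by
    intro z
    rw [hform, hMT, Matrix.fromBlocks_mulVec]
    simp only [Sum.elim_comp_inl, Sum.elim_comp_inr, Matrix.zero_mulVec, zero_add,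
      Matrix.one_mulVec]
    set bb : Fin mv → ℝ := Bvᵀ *ᵥ z with hbb
    have hw1 : Zᵀ *ᵥ (-(z ᵥ* Kmat)) + Yᵀ *ᵥ z = Vsᵀ *ᵥ bb := by
      have e1 : z ᵥ* Kmat = Kmatᵀ *ᵥ z := (Matrix.mulVec_transpose Kmat z).symm
      calc Zᵀ *ᵥ (-(z ᵥ* Kmat)) + Yᵀ *ᵥ z
          = -((Kmat * Z)ᵀ *ᵥ z) + Yᵀ *ᵥ z := by
            rw [e1, Matrix.mulVec_neg, Matrix.mulVec_mulVec, Matrix.transpose_mul]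
        _ = (Y - Kmat * Z)ᵀ *ᵥ z := by
            rw [Matrix.transpose_sub, Matrix.sub_mulVec, neg_add_eq_sub]
        _ = (Bv * Vs)ᵀ *ᵥ z := by rw [hKey]
        _ = Vsᵀ *ᵥ bb := by rw [Matrix.transpose_mul, ← Matrix.mulVec_mulVec, hbb]
    rw [hw1]
    unfold Wmat
    rw [Matrix.fromBlocks_mulVec]
    simp only [Sum.elim_comp_inl, Sum.elim_comp_inr]
    rw [sumElim_dotProduct_sumElim]
    set aa : Fin (N - l) → ℝ := Vsᵀ *ᵥ bb with haa
    have e2 : (S * Bvᵀ) *ᵥ z = S *ᵥ bb := by rw [← Matrix.mulVec_mulVec, hbb]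
    have e3 : (Bv * Sᵀ) *ᵥ aa = Bv *ᵥ (Sᵀ *ᵥ aa) := (Matrix.mulVec_mulVec aa Bv Sᵀ).symm
    have e4 : (Bv * R * Bvᵀ) *ᵥ z = Bv *ᵥ (R *ᵥ bb) := by
      rw [← Matrix.mulVec_mulVec, ← Matrix.mulVec_mulVec, hbb]
    have e5 : z ⬝ᵥ (Bv *ᵥ (Sᵀ *ᵥ aa) + Bv *ᵥ (R *ᵥ bb)) = bb ⬝ᵥ (Sᵀ *ᵥ aa + R *ᵥ bb) := by
      rw [← Matrix.mulVec_add, Matrix.dotProduct_mulVec, ← Matrix.mulVec_transpose, hbb]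
    have hVform := hV.2 bb
    rw [conj_quad'] at hVform
    rw [Matrix.fromRows_mulVec, Matrix.one_mulVec] at hVform
    rw [Matrix.fromBlocks_mulVec] at hVform
    simp only [Sum.elim_comp_inl, Sum.elim_comp_inr] at hVform
    rw [sumElim_dotProduct_sumElim] at hVform
    rw [e2, e3, e4, e5]
    exact hVform
  -- apply the dualization lemma
  -- apply the dualization lemma
  set d : ((rindex l m ⊕ Fin m) ⊕ Fin m) → ℝ := Nb⁻¹ *ᵥ c with hd
  have hNd : Nb *ᵥ d = c := by
    rw [hd, Matrix.mulVec_mulVec, Matrix.mul_nonsing_inv _ hinv, Matrix.one_mulVec]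
  have hker : ∀ z : Fin m → ℝ, Sum.elim (-(z ᵥ* Kmat)) z ⬝ᵥ (Nb *ᵥ d) = 0 := by
    intro z
    rw [hNd]
    have hcc : c = Sum.elim (fun i => c (Sum.inl i)) (fun a => c (Sum.inr a)) := by
      funext r; cases r <;> rfl
    rw [hcc, sumElim_dotProduct_sumElim]
    have : (fun a => c (Sum.inr a)) = Kmat *ᵥ fun i => c (Sum.inl i) := funext hc
    rw [this, neg_dotProduct, Matrix.dotProduct_mulVec]
    ring
  have := dual_lemma Nb hsym Kmat hQbar hpos d hker
  calc c ⬝ᵥ Nb⁻¹ *ᵥ c = d ⬝ᵥ Nb *ᵥ d := by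
        rw [← hd]
        nth_rewrite 1 [← hNd]
        rw [dotProduct_comm]
      _ ≤ 0 := this

lemma act_eq {a b : ℕ} (M : Matrix (Fin a) (Fin b) ℝ) (v : Evec b) :
    act M v = (M.map Complex.ofReal) *ᵥ v := rfl

lemma act_act {a b c : ℕ} (M : Matrix (Fin a) (Fin b) ℝ) (N : Matrix (Fin b) (Fin c) ℝ)
    (v : Evec c) : act M (act N v) = act (M * N) v := by
  show WithLp.toLp 2 ((M.map Complex.ofReal) *ᵥ ((N.map Complex.ofReal) *ᵥ WithLp.ofLp v)) =
    WithLp.toLp 2 (((M * N).map Complex.ofReal) *ᵥ WithLp.ofLp v)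
  have hmap : (M * N).map Complex.ofReal = M.map Complex.ofReal * N.map Complex.ofReal := by
    apply Matrix.ext
    intro i j
    simp [Matrix.mul_apply, Matrix.map_apply]
  rw [Matrix.mulVec_mulVec, hmap]

lemma act_zero {a b : ℕ} (M : Matrix (Fin a) (Fin b) ℝ) : act M (0 : Evec b) = 0 := by
  exact map_zero (Matrix.toEuclideanLin (M.map Complex.ofReal))

lemma norm_sq_evec {m : ℕ} (w : Evec m) :
    ‖w‖ ^ 2 = ∑ a, ((w a).re * (w a).re + (w a).im * (w a).im) := by
  rw [EuclideanSpace.norm_eq, Real.sq_sqrt (by positivity)]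
  refine Finset.sum_congr rfl fun a _ => ?_
  rw [← Complex.normSq_apply, ← Complex.sq_norm]

lemma enorm2_eq_of_support {m : ℕ} (f : ℕ → Evec m) (K : ℕ) (hf : ∀ k, K ≤ k → f k = 0) :
    enorm2 f = ENNReal.ofReal (Real.sqrt (∑ k ∈ Finset.range K, ‖f k‖ ^ 2)) := by
  unfold enorm2
  have h1 : (∑' k, ((‖f k‖₊ : ℝ≥0∞)) ^ 2) = ∑ k ∈ Finset.range K, ((‖f k‖₊ : ℝ≥0∞)) ^ 2 := by
    apply tsum_eq_sum
    intro b hb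
    rw [hf b (by simpa using hb)]
    simp
  have h2 : ∀ k, ((‖f k‖₊ : ℝ≥0∞)) ^ 2 = ENNReal.ofReal (‖f k‖ ^ 2) := by
    intro k
    rw [ENNReal.ofReal_pow (norm_nonneg _), ofReal_norm]; rfl
  rw [h1, Finset.sum_congr rfl (fun k _ => h2 k),
    ← ENNReal.ofReal_sum_of_nonneg (fun i _ => by positivity)]
  set Ss := ∑ k ∈ Finset.range K, ‖f k‖ ^ 2 with hSs
  have hS : 0 ≤ Ss := by positivity
  rcases eq_or_lt_of_le hS with h | h
  · rw [← h]
    rw [ENNReal.ofReal_zero, ENNReal.zero_rpow_of_pos (by norm_num), Real.sqrt_zero,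
      ENNReal.ofReal_zero]
  · rw [ENNReal.ofReal_rpow_of_pos h, ← Real.sqrt_eq_rpow]

/-- The core dissipation inequality: for every input and horizon, the truncated output energy
dominates `ζ²` times the truncated input energy. -/
lemma key_ineq {n m mv : ℕ}
    (A : Matrix (Fin n) (Fin n) ℝ) (B : Matrix (Fin n) (Fin m) ℝ)
    (C : Matrix (Fin m) (Fin n) ℝ) (D : Matrix (Fin m) (Fin m) ℝ)
    (l N : ℕ) (hl : 1 ≤ l)
    (Amats Bmats : Fin l → Matrix (Fin m) (Fin m) ℝ)
    (hdiff : ∀ (x : ℕ → Evec n) (uc yc : ℕ → Evec m),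
      (∀ k, x (k + 1) = act A (x k) + act B (uc k)) →
      (∀ k, yc k = act C (x k) + act D (uc k)) →
      ∀ k, l ≤ k →
        yc k = -(∑ i : Fin l, act (Amats i) (yc (k - l + (i : ℕ))))
          + act D (uc k) + ∑ i : Fin l, act (Bmats i) (uc (k - l + (i : ℕ))))
    (Bv : Matrix (Fin m) (Fin mv) ℝ)
    (Q : Matrix (Fin (N - l)) (Fin (N - l)) ℝ) (S : Matrix (Fin (N - l)) (Fin mv) ℝ)
    (R : Matrix (Fin mv) (Fin mv) ℝ) (hQ : IsNegDef Q) (hR : R.IsSymm)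
    (u y : ℕ → Fin m → ℝ) (v : ℕ → Fin mv → ℝ)
    (hdata : ∀ k, l ≤ k → k < N →
      y k = -(∑ i : Fin l, (Amats i).mulVec (y (k - l + (i : ℕ))))
        + D.mulVec (u k) + (∑ i : Fin l, (Bmats i).mulVec (u (k - l + (i : ℕ))))
        + Bv.mulVec (v k))
    (hV : inNoiseSet Q S R (Matrix.of fun a (j : Fin (N - l)) => v (l + (j : ℕ)) a))
    (hinvQSR : IsUnit (QSRbar l N u y Q S R Bv).det)
    (ζ : ℝ)
    (P : Matrix (rindex l m) (rindex l m) ℝ) (hP : IsPosSemidefR P) (μ : ℝ) (hμ : 0 ≤ μ)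
    (hLMI : IsNegSemidef
      ((Gmat l m)ᵀ * PhiMat P ((ζ ^ 2) • (1 : Matrix (Fin m) (Fin m) ℝ)) (-1) * Gmat l m
        - μ • (QSRbar l N u y Q S R Bv)⁻¹))
    (uvec : ℕ → Evec m) (K : ℕ) :
    ζ ^ 2 * ∑ k ∈ Finset.range K, ‖uvec k‖ ^ 2
      ≤ ∑ k ∈ Finset.range K, ‖output A B C D uvec k‖ ^ 2 := by
  classical
  -- the true system parameters in difference-operator form
  set Ctil : Matrix (Fin m) (rindex l m) ℝ :=
    Matrix.of fun a (r : rindex l m) =>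
      Sum.elim (fun p : Fin l × Fin m => Bmats p.1 a p.2)
        (fun p : Fin l × Fin m => -(Amats p.1 a p.2)) r with hCtildef
  set Kmat : Matrix (Fin m) (rindex l m ⊕ Fin m) ℝ := Matrix.fromCols Ctil D with hKmatdef
  have hCtil : ∀ (g h : Fin l → Fin m → ℝ) (a : Fin m),
      (Ctil *ᵥ Sum.elim (fun p : Fin l × Fin m => g p.1 p.2)
        (fun p : Fin l × Fin m => h p.1 p.2)) a
        = (∑ i : Fin l, (Bmats i *ᵥ g i) a) - ∑ i : Fin l, (Amats i *ᵥ h i) a := by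
    intro g h a
    show (∑ r : rindex l m, Ctil a r * Sum.elim (fun p : Fin l × Fin m => g p.1 p.2)
      (fun p : Fin l × Fin m => h p.1 p.2) r) = _
    rw [Fintype.sum_sum_type, Fintype.sum_prod_type, Fintype.sum_prod_type]
    simp only [hCtildef, Matrix.of_apply, Sum.elim_inl, Sum.elim_inr]
    have e1 : (∑ i : Fin l, ∑ b, Bmats i a b * g i b) = ∑ i : Fin l, (Bmats i *ᵥ g i) a :=
      Finset.sum_congr rfl fun i _ => rfl
    have e2 : (∑ i : Fin l, ∑ b, -Amats i a b * h i b)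
        = -∑ i : Fin l, (Amats i *ᵥ h i) a := by
      rw [← Finset.sum_neg_distrib]
      refine Finset.sum_congr rfl fun i _ => ?_
      show _ = -(∑ b, Amats i a b * h i b)
      rw [← Finset.sum_neg_distrib]
      exact Finset.sum_congr rfl fun b _ => by ring
    rw [e1, e2]
    ring
  -- the data consistency relation in matrix form
  have hdataK : ∀ j : Fin (N - l), ∀ a : Fin m,
      y (l + (j : ℕ)) a =
        (Kmat *ᵥ Sum.elim (fun r => xi l u y (l + (j : ℕ)) r) (fun b => u (l + (j : ℕ)) b)) a
          + (Bv *ᵥ v (l + (j : ℕ))) a := by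
    intro j a
    have hlt : l + (j : ℕ) < N := by have := j.2; omega
    have h := hdata (l + (j : ℕ)) (by omega) hlt
    simp only [Nat.add_sub_cancel_left] at h
    have ha := congrFun h a
    have hxi : (fun r => xi l u y (l + (j : ℕ)) r) =
        Sum.elim (fun p : Fin l × Fin m => u ((j : ℕ) + (p.1 : ℕ)) p.2)
          (fun p : Fin l × Fin m => y ((j : ℕ) + (p.1 : ℕ)) p.2) := by
      funext r
      cases r with
      | inl p => show u (l + (j : ℕ) - l + (p.1 : ℕ)) p.2 = _
                 rw [Nat.add_sub_cancel_left]; rfl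
      | inr p => show y (l + (j : ℕ) - l + (p.1 : ℕ)) p.2 = _
                 rw [Nat.add_sub_cancel_left]; rfl
    rw [hxi, hKmatdef, Matrix.fromCols_mulVec_sumElim]
    have hc := hCtil (fun i b => u ((j : ℕ) + (i : ℕ)) b) (fun i b => y ((j : ℕ) + (i : ℕ)) b) a
    have hsum1 : ((∑ i : Fin l, Amats i *ᵥ y ((j : ℕ) + (i : ℕ)))) a
        = ∑ i : Fin l, (Amats i *ᵥ y ((j : ℕ) + (i : ℕ))) a := Finset.sum_apply a _ _
    have hsum2 : ((∑ i : Fin l, Bmats i *ᵥ u ((j : ℕ) + (i : ℕ)))) a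
        = ∑ i : Fin l, (Bmats i *ᵥ u ((j : ℕ) + (i : ℕ))) a := Finset.sum_apply a _ _
    have ha' : y (l + (j : ℕ)) a = -((∑ i : Fin l, Amats i *ᵥ y ((j : ℕ) + (i : ℕ))) a)
        + (D *ᵥ u (l + (j : ℕ))) a + (∑ i : Fin l, Bmats i *ᵥ u ((j : ℕ) + (i : ℕ))) a
        + (Bv *ᵥ v (l + (j : ℕ))) a := ha
    rw [hsum1, hsum2] at ha'
    show y (l + (j : ℕ)) a =
      ((Ctil *ᵥ _) + (D *ᵥ _)) a + (Bv *ᵥ v (l + (j : ℕ))) a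
    show y (l + (j : ℕ)) a =
      ((Ctil *ᵥ Sum.elim (fun p : Fin l × Fin m => u ((j : ℕ) + (p.1 : ℕ)) p.2)
          (fun p : Fin l × Fin m => y ((j : ℕ) + (p.1 : ℕ)) p.2)) a
        + (D *ᵥ fun b => u (l + (j : ℕ)) b) a) + (Bv *ᵥ v (l + (j : ℕ))) a
    rw [hc]
    have : (D *ᵥ fun b => u (l + (j : ℕ)) b) a = (D *ᵥ u (l + (j : ℕ))) a := rfl
    rw [this]
    linarith
  -- the padded trajectory
  set ut : ℕ → Evec m := fun k => if k < l then 0 else uvec (k - l) with hut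
  set xt : ℕ → Evec n :=
    fun k => ∑ i ∈ Finset.range k, act (A ^ (k - 1 - i) * B) (ut i) with hxt
  set yt : ℕ → Evec m := fun k => act C (xt k) + act D (ut k) with hyt
  have hu0 : ∀ k, k < l → ut k = 0 := by intro k hk; simp [hut, hk]
  have hul : ∀ k, ut (k + l) = uvec k := by
    intro k
    simp [hut, Nat.add_sub_cancel, show ¬ (k + l < l) by omega]
  have hx0 : ∀ k, k ≤ l → xt k = 0 := by
    intro k hk
    rw [hxt]
    apply Finset.sum_eq_zero
    intro i hi
    rw [hu0 i (by simp at hi; omega), act_zero]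
  have hy0 : ∀ k, k < l → yt k = 0 := by
    intro k hk
    rw [hyt]
    show act C (xt k) + act D (ut k) = 0
    rw [hx0 k (le_of_lt hk), hu0 k hk, act_zero, act_zero, add_zero]
  have hrec : ∀ k, xt (k + 1) = act A (xt k) + act B (ut k) := by
    intro k
    have hA : act A (xt k) = ∑ i ∈ Finset.range k, act (A ^ (k - i) * B) (ut i) := by
      have h1 : act A (xt k) = ∑ i ∈ Finset.range k, act A (act (A ^ (k - 1 - i) * B) (ut i)) := by
        rw [hxt]
        exact map_sum (Matrix.toEuclideanLin (A.map Complex.ofReal)) _ _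
      rw [h1]
      refine Finset.sum_congr rfl fun i hi => ?_
      rw [act_act, ← Matrix.mul_assoc, ← pow_succ']
      have : k - 1 - i + 1 = k - i := by simp at hi; omega
      rw [this]
    rw [hA, hxt]
    show (∑ i ∈ Finset.range (k + 1), act (A ^ (k + 1 - 1 - i) * B) (ut i)) = _
    rw [Finset.sum_range_succ]
    have h2 : (∑ i ∈ Finset.range k, act (A ^ (k + 1 - 1 - i) * B) (ut i))
        = ∑ i ∈ Finset.range k, act (A ^ (k - i) * B) (ut i) := by
      refine Finset.sum_congr rfl fun i hi => ?_
      have : k + 1 - 1 - i = k - i := by omega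
      rw [this]
    rw [h2]
    have h3 : act (A ^ (k + 1 - 1 - k) * B) (ut k) = act B (ut k) := by
      have : k + 1 - 1 - k = 0 := by omega
      rw [this, pow_zero, Matrix.one_mul]
    rw [h3]
  have hdr := hdiff xt ut yt hrec (fun k => rfl)
  have hdr' : ∀ k, yt (k + l) = -(∑ i : Fin l, act (Amats i) (yt (k + (i : ℕ))))
      + act D (ut (k + l)) + ∑ i : Fin l, act (Bmats i) (ut (k + (i : ℕ))) := by
    intro k
    have := hdr (k + l) (by omega)
    simpa [Nat.add_sub_cancel] using this
  have hout : ∀ k, yt (k + l) = output A B C D uvec k := by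
    intro k
    have hx : xt (k + l) = ∑ j ∈ Finset.range k, act (A ^ (k - 1 - j) * B) (uvec j) := by
      rw [hxt]
      show (∑ i ∈ Finset.range (k + l), act (A ^ (k + l - 1 - i) * B) (ut i)) = _
      rw [show k + l = l + k by omega, Finset.sum_range_add]
      have hz : (∑ i ∈ Finset.range l, act (A ^ (l + k - 1 - i) * B) (ut i)) = 0 := by
        apply Finset.sum_eq_zero
        intro i hi
        rw [hu0 i (by simpa using hi), act_zero]
      rw [hz, zero_add]
      refine Finset.sum_congr rfl fun j hj => ?_
      have h1 : ut (l + j) = uvec j := by rw [show l + j = j + l by omega, hul]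
      have h2 : l + k - 1 - (l + j) = k - 1 - j := by omega
      rw [h1, h2]
    rw [hyt]
    show act C (xt (k + l)) + act D (ut (k + l)) = _
    rw [hx, hul k]
    have hC : act C (∑ j ∈ Finset.range k, act (A ^ (k - 1 - j) * B) (uvec j))
        = ∑ j ∈ Finset.range k, act (C * A ^ (k - 1 - j) * B) (uvec j) := by
      have h1 : act C (∑ j ∈ Finset.range k, act (A ^ (k - 1 - j) * B) (uvec j))
          = ∑ j ∈ Finset.range k, act C (act (A ^ (k - 1 - j) * B) (uvec j)) :=
        map_sum (Matrix.toEuclideanLin (C.map Complex.ofReal)) _ _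
      rw [h1]
      refine Finset.sum_congr rfl fun j _ => ?_
      rw [act_act, ← Matrix.mul_assoc]
    rw [hC]
    unfold output
    exact add_comm _ _
  -- the main φ-component inequality
  have hmain : ∀ (φ : ℂ →ₗ[ℝ] ℝ), (∀ (r : ℝ) (z : ℂ), φ ((r : ℂ) * z) = r * φ z) →
      ∀ K' : ℕ,
      ∑ k ∈ Finset.range K', ζ ^ 2 * (∑ a, φ (ut (k + l) a) * φ (ut (k + l) a))
        ≤ ∑ k ∈ Finset.range K', ∑ a, φ (yt (k + l) a) * φ (yt (k + l) a) := by
    intro φ hφ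
    have hact_comp : ∀ {a' b' : ℕ} (M : Matrix (Fin a') (Fin b') ℝ) (w : Evec b') (i : Fin a'),
        φ (act M w i) = (M *ᵥ fun j => φ (w j)) i := by
      intro a' b' M w i
      show φ (∑ j, (M i j : ℂ) * w j) = ∑ j, M i j * φ (w j)
      rw [map_sum]
      exact Finset.sum_congr rfl fun j _ => hφ _ _
    set ξf : ℕ → (rindex l m → ℝ) := fun k =>
      Sum.elim (fun p : Fin l × Fin m => φ (ut (k + (p.1 : ℕ)) p.2))
        (fun p : Fin l × Fin m => φ (yt (k + (p.1 : ℕ)) p.2)) with hξf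
    have step : ∀ k : ℕ,
        ξf (k + 1) ⬝ᵥ P *ᵥ ξf (k + 1) - ξf k ⬝ᵥ P *ᵥ ξf k
          + ζ ^ 2 * (∑ a, φ (ut (k + l) a) * φ (ut (k + l) a))
          - (∑ a, φ (yt (k + l) a) * φ (yt (k + l) a)) ≤ 0 := by
      intro k
      set uuφ : Fin m → ℝ := fun a => φ (ut (k + l) a) with huuφ
      set yyφ : Fin m → ℝ := fun a => φ (yt (k + l) a) with hyyφ
      have hshift : Kshift l m *ᵥ Sum.elim (Sum.elim (ξf k) uuφ) yyφ = ξf (k + 1) := by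
        rw [kshift_mulVec]
        funext r
        cases r with
        | inl p =>
          obtain ⟨i, a⟩ := p
          simp only [Sum.elim_inl]
          by_cases h : (i : ℕ) + 1 < l
          · rw [dif_pos h]
            show φ (ut (k + ((i : ℕ) + 1)) a) = φ (ut (k + 1 + (i : ℕ)) a)
            rw [show k + ((i : ℕ) + 1) = k + 1 + (i : ℕ) by omega]
          · rw [dif_neg h]
            show φ (ut (k + l) a) = φ (ut (k + 1 + (i : ℕ)) a)
            rw [show k + 1 + (i : ℕ) = k + l by have := i.2; omega]
        | inr p =>
          obtain ⟨i, a⟩ := p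
          simp only [Sum.elim_inr]
          by_cases h : (i : ℕ) + 1 < l
          · rw [dif_pos h]
            show φ (yt (k + ((i : ℕ) + 1)) a) = φ (yt (k + 1 + (i : ℕ)) a)
            rw [show k + ((i : ℕ) + 1) = k + 1 + (i : ℕ) by omega]
          · rw [dif_neg h]
            show φ (yt (k + l) a) = φ (yt (k + 1 + (i : ℕ)) a)
            rw [show k + 1 + (i : ℕ) = k + l by have := i.2; omega]
      have hgraph : ∀ a : Fin m, Sum.elim (Sum.elim (ξf k) uuφ) yyφ (Sum.inr a)
          = (Kmat *ᵥ fun i => Sum.elim (Sum.elim (ξf k) uuφ) yyφ (Sum.inl i)) a := by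
        intro a
        have hfe : (fun i => Sum.elim (Sum.elim (ξf k) uuφ) yyφ (Sum.inl i))
            = Sum.elim (ξf k) uuφ := by funext i; cases i <;> rfl
        rw [hfe, hKmatdef, Matrix.fromCols_mulVec_sumElim]
        show yyφ a = ((Ctil *ᵥ ξf k) + (D *ᵥ uuφ)) a
        show yyφ a = (Ctil *ᵥ ξf k) a + (D *ᵥ uuφ) a
        have hc' : (Ctil *ᵥ ξf k) a
            = (∑ i : Fin l, (Bmats i *ᵥ fun b => φ (ut (k + (i : ℕ)) b)) a)
              - ∑ i : Fin l, (Amats i *ᵥ fun b => φ (yt (k + (i : ℕ)) b)) a :=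
          hCtil (fun i b => φ (ut (k + (i : ℕ)) b)) (fun i b => φ (yt (k + (i : ℕ)) b)) a
        rw [hc']
        show φ (yt (k + l) a) = _
        rw [hdr' k]
        have happ1 : (-(∑ i : Fin l, act (Amats i) (yt (k + (i : ℕ)))) + act D (ut (k + l))
            + ∑ i : Fin l, act (Bmats i) (ut (k + (i : ℕ)))) a
            = -((∑ i : Fin l, act (Amats i) (yt (k + (i : ℕ)))) a) + act D (ut (k + l)) a
              + (∑ i : Fin l, act (Bmats i) (ut (k + (i : ℕ)))) a := rfl
        rw [happ1, map_add, map_add, map_neg]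
        have hs1 : ((∑ i : Fin l, act (Amats i) (yt (k + (i : ℕ)))) a)
            = ∑ i : Fin l, act (Amats i) (yt (k + (i : ℕ))) a := by
              rw [WithLp.ofLp_sum, Finset.sum_apply]
        have hs2 : ((∑ i : Fin l, act (Bmats i) (ut (k + (i : ℕ)))) a)
            = ∑ i : Fin l, act (Bmats i) (ut (k + (i : ℕ))) a := by
              rw [WithLp.ofLp_sum, Finset.sum_apply]
        rw [hs1, hs2, map_sum, map_sum]
        have ht1 : ∀ i : Fin l, φ (act (Amats i) (yt (k + (i : ℕ))) a)
            = (Amats i *ᵥ fun b => φ (yt (k + (i : ℕ)) b)) a := fun i => hact_comp _ _ _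
        have ht2 : ∀ i : Fin l, φ (act (Bmats i) (ut (k + (i : ℕ))) a)
            = (Bmats i *ᵥ fun b => φ (ut (k + (i : ℕ)) b)) a := fun i => hact_comp _ _ _
        have ht3 : φ (act D (ut (k + l)) a) = (D *ᵥ uuφ) a := hact_comp _ _ _
        rw [Finset.sum_congr rfl fun i _ => ht1 i, Finset.sum_congr rfl fun i _ => ht2 i, ht3]
        ring
      have hneg := negform u y v Q S R Bv hQ hR hV Kmat hdataK hinvQSR
        (Sum.elim (Sum.elim (ξf k) uuφ) yyφ) hgraph
      have hq := hLMI.2 (Sum.elim (Sum.elim (ξf k) uuφ) yyφ)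
      rw [Matrix.sub_mulVec, dotProduct_sub, Matrix.smul_mulVec,
        dotProduct_smul, smul_eq_mul, gphi_form, hshift] at hq
      have e1 : uuφ ⬝ᵥ (ζ ^ 2 • (1 : Matrix (Fin m) (Fin m) ℝ)) *ᵥ uuφ
          = ζ ^ 2 * (∑ a, φ (ut (k + l) a) * φ (ut (k + l) a)) := by
        rw [Matrix.smul_mulVec, Matrix.one_mulVec, dotProduct_smul, smul_eq_mul]
        rfl
      have e2 : yyφ ⬝ᵥ (-1 : Matrix (Fin m) (Fin m) ℝ) *ᵥ yyφ
          = -(∑ a, φ (yt (k + l) a) * φ (yt (k + l) a)) := by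
        rw [Matrix.neg_mulVec, Matrix.one_mulVec, dotProduct_neg]
        rfl
      rw [e1, e2] at hq
      nlinarith [mul_nonneg hμ (neg_nonneg.mpr hneg)]
    have hx0' : ξf 0 = 0 := by
      funext r
      cases r with
      | inl p =>
        show φ (ut (0 + (p.1 : ℕ)) p.2) = 0
        rw [hu0 _ (by simpa using p.1.2)]
        exact map_zero φ
      | inr p =>
        show φ (yt (0 + (p.1 : ℕ)) p.2) = 0
        rw [hy0 _ (by simpa using p.1.2)]
        exact map_zero φ
    have htel : ∀ K' : ℕ, ξf K' ⬝ᵥ P *ᵥ ξf K'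
        + ∑ k ∈ Finset.range K', (ζ ^ 2 * (∑ a, φ (ut (k + l) a) * φ (ut (k + l) a))
            - ∑ a, φ (yt (k + l) a) * φ (yt (k + l) a)) ≤ 0 := by
      intro K'
      induction K' with
      | zero => simp [hx0']
      | succ K'' ih =>
        rw [Finset.sum_range_succ]
        have := step K''
        linarith
    intro K'
    have hPpos := hP.2 (ξf K')
    have h := htel K'
    rw [Finset.sum_sub_distrib] at h
    linarith
  have hre := hmain Complex.reLm (by intro r z; simp [Complex.mul_re]) K
  have him := hmain Complex.imLm (by intro r z; simp [Complex.mul_im]) K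
  simp only [show ∀ z : ℂ, Complex.reLm z = z.re from fun _ => rfl,
    show ∀ z : ℂ, Complex.imLm z = z.im from fun _ => rfl] at hre him
  have hu2 : ∀ k, ‖uvec k‖ ^ 2 = (∑ a, (ut (k + l) a).re * (ut (k + l) a).re)
      + ∑ a, (ut (k + l) a).im * (ut (k + l) a).im := by
    intro k
    rw [← hul k, norm_sq_evec, Finset.sum_add_distrib]
  have hy2 : ∀ k, ‖output A B C D uvec k‖ ^ 2 = (∑ a, (yt (k + l) a).re * (yt (k + l) a).re)
      + ∑ a, (yt (k + l) a).im * (yt (k + l) a).im := by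
    intro k
    rw [← hout k, norm_sq_evec, Finset.sum_add_distrib]
  calc ζ ^ 2 * ∑ k ∈ Finset.range K, ‖uvec k‖ ^ 2
      = (∑ k ∈ Finset.range K, ζ ^ 2 * (∑ a, (ut (k + l) a).re * (ut (k + l) a).re))
        + ∑ k ∈ Finset.range K, ζ ^ 2 * (∑ a, (ut (k + l) a).im * (ut (k + l) a).im) := by
        rw [Finset.mul_sum, ← Finset.sum_add_distrib]
        exact Finset.sum_congr rfl fun k _ => by rw [hu2 k]; ring
    _ ≤ (∑ k ∈ Finset.range K, ∑ a, (yt (k + l) a).re * (yt (k + l) a).re)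
        + ∑ k ∈ Finset.range K, ∑ a, (yt (k + l) a).im * (yt (k + l) a).im :=
        add_le_add hre him
    _ = ∑ k ∈ Finset.range K, ‖output A B C D uvec k‖ ^ 2 := by
        rw [← Finset.sum_add_distrib]
        exact Finset.sum_congr rfl fun k _ => (hy2 k).symm

/-- Robust data-driven lower bound on `lim_{τ→∞} γ₋(T^τ)` from noisy data. -/
theorem stmt16 {n m mv : ℕ} (hn : 1 ≤ n) (hm : 1 ≤ m) (hmv : 1 ≤ mv)
    (A : Matrix (Fin n) (Fin n) ℝ) (B : Matrix (Fin n) (Fin m) ℝ)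
    (C : Matrix (Fin m) (Fin n) ℝ) (D : Matrix (Fin m) (Fin m) ℝ)
    (l N : ℕ) (hl : 1 ≤ l) (hN : 1 ≤ N) (hlag : lag A C ≤ l)
    (Amats Bmats : Fin l → Matrix (Fin m) (Fin m) ℝ)
    -- the true system admits the difference-operator representation
    -- y_k = −A_l y_{k-1} − ⋯ − A_1 y_{k-l} + D u_k + B_l u_{k-1} + ⋯ + B_1 u_{k-l}:
    (hdiff : ∀ (x : ℕ → Evec n) (uc yc : ℕ → Evec m),
      (∀ k, x (k + 1) = act A (x k) + act B (uc k)) →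
      (∀ k, yc k = act C (x k) + act D (uc k)) →
      ∀ k, l ≤ k →
        yc k = -(∑ i : Fin l, act (Amats i) (yc (k - l + (i : ℕ))))
          + act D (uc k) + ∑ i : Fin l, act (Bmats i) (uc (k - l + (i : ℕ))))
    (Bv : Matrix (Fin m) (Fin mv) ℝ)
    (Q : Matrix (Fin (N - l)) (Fin (N - l)) ℝ) (S : Matrix (Fin (N - l)) (Fin mv) ℝ)
    (R : Matrix (Fin mv) (Fin mv) ℝ) (hQ : IsNegDef Q) (hR : R.IsSymm)
    (u y : ℕ → Fin m → ℝ) (v : ℕ → Fin mv → ℝ)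
    -- the measured data is generated by the true system corrupted by the noise v:
    (hdata : ∀ k, l ≤ k → k < N →
      y k = -(∑ i : Fin l, (Amats i).mulVec (y (k - l + (i : ℕ))))
        + D.mulVec (u k) + (∑ i : Fin l, (Bmats i).mulVec (u (k - l + (i : ℕ))))
        + Bv.mulVec (v k))
    -- the noise matrix V* = (v_l ⋯ v_{N-1}) belongs to 𝒱:
    (hV : inNoiseSet Q S R (Matrix.of fun a (j : Fin (N - l)) => v (l + (j : ℕ)) a))
    (hinvQSR : IsUnit (QSRbar l N u y Q S R Bv).det)
    (ζ : ℝ) (hζ : 0 ≤ ζ)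
    (P : Matrix (rindex l m) (rindex l m) ℝ) (hP : IsPosSemidefR P) (μ : ℝ) (hμ : 0 ≤ μ)
    (hLMI : IsNegSemidef
      ((Gmat l m)ᵀ * PhiMat P ((ζ ^ 2) • (1 : Matrix (Fin m) (Fin m) ℝ)) (-1) * Gmat l m
        - μ • (QSRbar l N u y Q S R Bv)⁻¹)) :
    ∀ L : ℝ≥0∞,
      Tendsto (fun τ : ℕ => minGain (ltwoTau m (τ + 1)) (TtauMap A B C D (τ + 1))) atTop (𝓝 L) →
        ENNReal.ofReal ζ ≤ L := by
  intro L hL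
  refine ge_of_tendsto' hL fun τ => ?_
  unfold minGain
  refine le_iInf₂ fun uvec hu => ?_
  obtain ⟨hdom, hne⟩ := hu
  set K := τ + 2 with hK
  set Su := ∑ k ∈ Finset.range K, ‖uvec k‖ ^ 2 with hSu
  set Sy := ∑ k ∈ Finset.range K, ‖output A B C D uvec k‖ ^ 2 with hSy
  have hu_supp : ∀ k, K ≤ k → uvec k = 0 := fun k hk => hdom k (by omega)
  have hT_supp : ∀ k, K ≤ k → TtauMap A B C D (τ + 1) uvec k = 0 := by
    intro k hk
    unfold TtauMap
    rw [if_neg (by omega)]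
  have hEu : enorm2 uvec = ENNReal.ofReal (Real.sqrt Su) := enorm2_eq_of_support uvec K hu_supp
  have hEy : enorm2 (TtauMap A B C D (τ + 1) uvec) = ENNReal.ofReal (Real.sqrt Sy) := by
    rw [enorm2_eq_of_support _ K hT_supp, hSy]
    congr 2
    refine Finset.sum_congr rfl fun k hk => ?_
    have hk' : k ≤ τ + 1 := by simp at hk; omega
    unfold TtauMap
    rw [if_pos hk']
  have hkey : ζ ^ 2 * Su ≤ Sy :=
    key_ineq A B C D l N hl Amats Bmats hdiff Bv Q S R hQ hR u y v hdata hV hinvQSR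
      ζ P hP μ hμ hLMI uvec K
  have hSu_pos : 0 < Su := by
    obtain ⟨k, hk⟩ := Function.ne_iff.mp hne
    have hkK : k < K := by
      by_contra hcon
      exact hk (hu_supp k (by omega))
    have h0 : 0 < ‖uvec k‖ := norm_pos_iff.mpr hk
    have h1 : 0 < ‖uvec k‖ ^ 2 := by positivity
    have h2 : ‖uvec k‖ ^ 2 ≤ Su := by
      rw [hSu]
      exact Finset.single_le_sum (f := fun i => ‖uvec i‖ ^ 2) (fun i _ => by positivity)
        (by simpa using hkK)
    linarith
  rw [hEu, hEy]
  rw [ENNReal.le_div_iff_mul_le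
    (Or.inl (by simp [Real.sqrt_pos]; positivity))
    (Or.inl ENNReal.ofReal_ne_top)]
  rw [← ENNReal.ofReal_mul hζ]
  refine ENNReal.ofReal_le_ofReal ?_
  have h3 : ζ * Real.sqrt Su = Real.sqrt (ζ ^ 2 * Su) := by
    rw [Real.sqrt_mul (by positivity), Real.sqrt_sq hζ]
  rw [h3]
  exact Real.sqrt_le_sqrt hkey
end
end

section
/- Under the noisy-data setup (true system in difference-operator form with l at least its lag, data consistent with some noise V* ∈ 𝒱, Q ≺ 0, and the matrix [[Q̄, S̄],[S̄ᵀ, R̄]] invertible): if there exist a symmetric P ∈ ℝ^{2ml×2ml} (not necessarily positive semidefinite) and μ ≥ 0 such that Gᵀ·diag(−P, P, −γ²I_m, I_m)·G − μ·[[Q̃, S̃],[S̃ᵀ, R̃]] ⪯ 0, then Γ(T) ≤ γ; similarly, if there exist symmetric P and μ ≥ 0 with Gᵀ·diag(−P, P, ζ²I_m, −I_m)·G − μ·[[Q̃, S̃],[S̃ᵀ, R̃]] ⪯ 0, then γ₋(T) ≥ ζ, where T is the input-output operator of the true noise-free system on dom(T) = { u ∈ ℓ₂^m : y ∈ ℓ₂^m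 }. -/
open scoped ENNReal
open Filter Matrix Topology

noncomputable section

section LA
variable {ι κ σ : Type*} [Fintype ι] [Fintype κ] [Fintype σ]
  [DecidableEq ι] [DecidableEq κ] [DecidableEq σ]

lemma inv_mulVec_cancel {barP : Matrix ι ι ℝ} (hdet : IsUnit barP.det) (w : ι → ℝ) :
    barP⁻¹ *ᵥ (barP *ᵥ w) = w := by
  rw [mulVec_mulVec, nonsing_inv_mul _ hdet, one_mulVec]

lemma mulVec_inv_cancel {barP : Matrix ι ι ℝ} (hdet : IsUnit barP.det) (w : ι → ℝ) :
    barP *ᵥ (barP⁻¹ *ᵥ w) = w := by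
  rw [mulVec_mulVec, mul_nonsing_inv _ hdet, one_mulVec]

lemma dot_sym {S : Matrix ι ι ℝ} (hS : Sᵀ = S) (x y : ι → ℝ) :
    x ⬝ᵥ S *ᵥ y = y ⬝ᵥ S *ᵥ x := by
  rw [dotProduct_mulVec, ← mulVec_transpose, hS, dotProduct_comm]

lemma mul_inv_cancel_dot {barP : Matrix ι ι ℝ} (hsym : barPᵀ = barP)
    (hdet : IsUnit barP.det) (w z : ι → ℝ) :
    (barP *ᵥ w) ⬝ᵥ barP⁻¹ *ᵥ z = w ⬝ᵥ z := by
  rw [dotProduct_mulVec, ← mulVec_transpose, transpose_nonsing_inv, hsym,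
    inv_mulVec_cancel hdet]

lemma dot_mulVec_left (F : Matrix κ ι ℝ) (a : κ → ℝ) (v : ι → ℝ) :
    (Fᵀ *ᵥ a) ⬝ᵥ v = a ⬝ᵥ F *ᵥ v := by
  rw [dotProduct_mulVec, ← mulVec_transpose]

/-- Dualization lemma. -/
lemma dual_neg {barP : Matrix ι ι ℝ} (hsym : barPᵀ = barP) (hdet : IsUnit barP.det)
    (F : Matrix κ ι ℝ) (hFinj : ∀ a : κ → ℝ, Fᵀ *ᵥ a = 0 → a = 0)
    (hpos : ∀ a : κ → ℝ, 0 ≤ (Fᵀ *ᵥ a) ⬝ᵥ barP *ᵥ (Fᵀ *ᵥ a))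
    (hneg : ∀ T : Submodule ℝ (ι → ℝ), Fintype.card κ < Module.finrank ℝ T →
      ∃ x ∈ T, x ⬝ᵥ barP *ᵥ x < 0) :
    ∀ z : ι → ℝ, F *ᵥ z = 0 → z ⬝ᵥ barP⁻¹ *ᵥ z ≤ 0 := by
  have hsyminv : (barP⁻¹)ᵀ = barP⁻¹ := by rw [transpose_nonsing_inv, hsym]
  intro z hz
  by_contra hpz
  push_neg at hpz
  set f : (κ → ℝ) →ₗ[ℝ] (ι → ℝ) := barP.mulVecLin ∘ₗ (Fᵀ).mulVecLin with hf
  have hfapp : ∀ a, f a = barP *ᵥ (Fᵀ *ᵥ a) := fun a => rfl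
  have hker : LinearMap.ker f = ⊥ := by
    rw [LinearMap.ker_eq_bot']
    intro a ha
    apply hFinj
    have ha' : barP *ᵥ (Fᵀ *ᵥ a) = 0 := ha
    have h2 := congrArg (fun v => barP⁻¹ *ᵥ v) ha'
    simp only [inv_mulVec_cancel hdet, mulVec_zero] at h2
    exact h2
  set Vp := LinearMap.range f with hVp
  have hdimVp : Module.finrank ℝ Vp = Fintype.card κ := by
    have h1 := LinearMap.finrank_range_add_finrank_ker f
    rw [hker] at h1
    simp only [finrank_bot, add_zero, Module.finrank_fintype_fun_eq_card] at h1
    exact h1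
  have hcross : ∀ a : κ → ℝ, (f a) ⬝ᵥ barP⁻¹ *ᵥ z = 0 := by
    intro a
    rw [hfapp, mul_inv_cancel_dot hsym hdet, dot_mulVec_left, hz, dotProduct_zero]
  have hfform : ∀ a : κ → ℝ, (f a) ⬝ᵥ barP⁻¹ *ᵥ (f a) = (Fᵀ *ᵥ a) ⬝ᵥ barP *ᵥ (Fᵀ *ᵥ a) := by
    intro a
    rw [hfapp, mul_inv_cancel_dot hsym hdet, dotProduct_comm]
  have hznot : z ∉ Vp := by
    rintro ⟨a, rfl⟩
    exact hpz.ne' (hcross a)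
  set U := Vp ⊔ Submodule.span ℝ {z} with hU
  have hzU : z ∈ U := Submodule.mem_sup_right (Submodule.mem_span_singleton_self z)
  have hVltU : Vp < U := lt_of_le_of_ne le_sup_left (fun h => hznot (h ▸ hzU))
  have hdimU : Fintype.card κ < Module.finrank ℝ U :=
    hdimVp ▸ Submodule.finrank_lt_finrank_of_lt hVltU
  have hUpos : ∀ w ∈ U, 0 ≤ w ⬝ᵥ barP⁻¹ *ᵥ w := by
    intro w hw
    rw [hU, Submodule.mem_sup] at hw
    obtain ⟨p, hp, q, hq, rfl⟩ := hw
    obtain ⟨a, rfl⟩ := hp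
    rw [Submodule.mem_span_singleton] at hq
    obtain ⟨t, rfl⟩ := hq
    have hc1 : (f a) ⬝ᵥ barP⁻¹ *ᵥ (t • z) = 0 := by
      rw [mulVec_smul, dotProduct_smul, hcross, smul_zero]
    have hc2 : (t • z) ⬝ᵥ barP⁻¹ *ᵥ (f a) = 0 := by
      rw [dot_sym hsyminv, hc1]
    have hq2 : (t • z) ⬝ᵥ barP⁻¹ *ᵥ (t • z) = t^2 * (z ⬝ᵥ barP⁻¹ *ᵥ z) := by
      rw [mulVec_smul, dotProduct_smul, smul_dotProduct]
      ring_nf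
    have hexp : (f a + t • z) ⬝ᵥ barP⁻¹ *ᵥ (f a + t • z)
        = (f a) ⬝ᵥ barP⁻¹ *ᵥ (f a) + t^2 * (z ⬝ᵥ barP⁻¹ *ᵥ z) := by
      rw [mulVec_add, dotProduct_add, add_dotProduct, add_dotProduct, hq2]
      rw [show (f a) ⬝ᵥ barP⁻¹ *ᵥ (t • z) = 0 from hc1, show (t • z) ⬝ᵥ barP⁻¹ *ᵥ (f a) = 0 from hc2]
      ring
    rw [hexp, hfform]
    have := hpos a
    nlinarith [sq_nonneg t, hpz.le]
  -- transfer to barP via barP⁻¹-image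
  have hdetinv : IsUnit (barP⁻¹).det := (Matrix.isUnit_nonsing_inv_det barP hdet)
  have hinvinj : Function.Injective (barP⁻¹.mulVecLin) := by
    intro x y hxy
    have : barP *ᵥ (barP⁻¹ *ᵥ x) = barP *ᵥ (barP⁻¹ *ᵥ y) := by
      simpa [Matrix.mulVecLin] using congrArg (fun v => barP *ᵥ v) hxy
    rwa [mulVec_inv_cancel hdet, mulVec_inv_cancel hdet] at this
  set T := Submodule.map (barP⁻¹.mulVecLin) U with hT
  have hdimT : Fintype.card κ < Module.finrank ℝ T := by
    have heq := (Submodule.equivMapOfInjective _ hinvinj U).finrank_eq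
    rw [hT]
    rw [← heq]
    exact hdimU
  obtain ⟨x, hxT, hxneg⟩ := hneg T hdimT
  obtain ⟨w, hwU, rfl⟩ := hxT
  have : (barP⁻¹.mulVecLin w) ⬝ᵥ barP *ᵥ (barP⁻¹.mulVecLin w) = w ⬝ᵥ barP⁻¹ *ᵥ w := by
    show (barP⁻¹ *ᵥ w) ⬝ᵥ barP *ᵥ (barP⁻¹ *ᵥ w) = _
    rw [mulVec_inv_cancel hdet, dotProduct_comm]
  rw [this] at hxneg
  exact absurd (hUpos w hwU) (not_le.mpr hxneg)

end LA

section NB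
variable {ι κ σ : Type*} [Fintype ι] [Fintype κ] [Fintype σ]
  [DecidableEq ι] [DecidableEq κ] [DecidableEq σ]

lemma negBeyond_MWM {M : Matrix ι (σ ⊕ κ) ℝ} {Q : Matrix σ σ ℝ}
    (S₂ : Matrix σ κ ℝ) (S₃ : Matrix κ σ ℝ) (R₂ : Matrix κ κ ℝ)
    (hQ : ∀ q : σ → ℝ, q ≠ 0 → q ⬝ᵥ Q *ᵥ q < 0)
    (hdet : IsUnit (M * fromBlocks Q S₂ S₃ R₂ * Mᵀ).det) :
    ∀ T : Submodule ℝ (ι → ℝ), Fintype.card κ < Module.finrank ℝ T →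
      ∃ x ∈ T, x ⬝ᵥ (M * fromBlocks Q S₂ S₃ R₂ * Mᵀ) *ᵥ x < 0 := by
  intro T hT
  set W := fromBlocks Q S₂ S₃ R₂ with hW
  have hexpand : ∀ x : ι → ℝ, (M * W * Mᵀ) *ᵥ x = M *ᵥ (W *ᵥ (Mᵀ *ᵥ x)) := by
    intro x; rw [mulVec_mulVec, mulVec_mulVec]
  have hMinj : Function.Injective (Mᵀ.mulVecLin) := by
    rw [← LinearMap.ker_eq_bot, LinearMap.ker_eq_bot']
    intro x hx
    have hx' : Mᵀ *ᵥ x = 0 := hx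
    have h1 : (M * W * Mᵀ) *ᵥ x = 0 := by rw [hexpand, hx', mulVec_zero, mulVec_zero]
    have h2 := congrArg (fun v => (M * W * Mᵀ)⁻¹ *ᵥ v) h1
    simpa [inv_mulVec_cancel hdet] using h2
  set T' := Submodule.map (Mᵀ.mulVecLin) T with hT'
  have hdimT' : Fintype.card κ < Module.finrank ℝ T' := by
    have heq := (Submodule.equivMapOfInjective _ hMinj T).finrank_eq
    rw [hT', ← heq]; exact hT
  set π : ((σ ⊕ κ) → ℝ) →ₗ[ℝ] (κ → ℝ) := LinearMap.funLeft ℝ ℝ Sum.inr with hπ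
  set g := π.comp T'.subtype with hg
  have hkerpos : 0 < Module.finrank ℝ (LinearMap.ker g) := by
    have h1 := LinearMap.finrank_range_add_finrank_ker g
    have h2 : Module.finrank ℝ (LinearMap.range g) ≤ Fintype.card κ := by
      have := Submodule.finrank_le (LinearMap.range g)
      rwa [Module.finrank_fintype_fun_eq_card] at this
    have h3 : Module.finrank ℝ ↥T' = Module.finrank ℝ (⊤ : Submodule ℝ ↥T') := by
      rw [finrank_top]
    omega
  have : Nontrivial (LinearMap.ker g) := by
    rw [← Module.finrank_pos_iff (R := ℝ)]; exact hkerpos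
  obtain ⟨⟨y, hygker⟩, hyne⟩ := exists_ne (0 : LinearMap.ker g)
  have hyT' : (y : (σ ⊕ κ) → ℝ) ∈ T' := y.2
  have hyinr : (y : (σ ⊕ κ) → ℝ) ∘ Sum.inr = 0 := by
    have := hygker
    rw [LinearMap.mem_ker] at this
    exact this
  have hyne' : (y : (σ ⊕ κ) → ℝ) ≠ 0 := by
    intro h
    apply hyne
    ext
    simpa using congrFun (congrArg (fun v => v) h) _
  obtain ⟨x, hxT, hxy⟩ := hyT'
  refine ⟨x, hxT, ?_⟩
  have hform : x ⬝ᵥ (M * W * Mᵀ) *ᵥ x = (y : (σ ⊕ κ) → ℝ) ⬝ᵥ W *ᵥ (y : (σ ⊕ κ) → ℝ) := by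
    rw [hexpand, dotProduct_mulVec x M, ← mulVec_transpose]
    have hxy' : Mᵀ *ᵥ x = (y : (σ ⊕ κ) → ℝ) := hxy
    rw [hxy']
  rw [hform]
  set y1 := (y : (σ ⊕ κ) → ℝ) ∘ Sum.inl with hy1
  have hy1ne : y1 ≠ 0 := by
    intro h
    apply hyne'
    funext c
    cases c with
    | inl c => exact congrFun h c
    | inr c => exact congrFun hyinr c
  have hsplit : (y : (σ ⊕ κ) → ℝ) = Sum.elim y1 0 := by
    funext c
    cases c with
    | inl c => rfl
    | inr c => exact congrFun hyinr c
  rw [hsplit, hW, fromBlocks_mulVec]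
  simp only [Sum.elim_comp_inl, Sum.elim_comp_inr, mulVec_zero, add_zero]
  rw [sumElim_dotProduct_sumElim]
  simp only [zero_dotProduct, add_zero]
  exact hQ y1 hy1ne

end NB

/-- The row block C̃ = (B₁ ⋯ B_l, −A₁ ⋯ −A_l). -/
def Ctil {m : ℕ} (l : ℕ) (Amats Bmats : Fin l → Matrix (Fin m) (Fin m) ℝ) :
    Matrix (Fin m) (rindex l m) ℝ :=
  Matrix.of fun a r => Sum.elim (fun p => Bmats p.1 a p.2) (fun p => -Amats p.1 a p.2) r

/-- The matrix F = (C̃ D −I). -/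
def Fmat {m : ℕ} (l : ℕ) (Amats Bmats : Fin l → Matrix (Fin m) (Fin m) ℝ)
    (D : Matrix (Fin m) (Fin m) ℝ) : Matrix (Fin m) ((rindex l m ⊕ Fin m) ⊕ Fin m) ℝ :=
  Matrix.fromCols (Matrix.fromCols (Ctil l Amats Bmats) D) (-1)

lemma Fmat_transpose_inj {m : ℕ} (l : ℕ) (Amats Bmats : Fin l → Matrix (Fin m) (Fin m) ℝ)
    (D : Matrix (Fin m) (Fin m) ℝ) (a : Fin m → ℝ)
    (h : (Fmat l Amats Bmats D)ᵀ *ᵥ a = 0) : a = 0 := by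
  funext c
  have h2 := congrFun h (Sum.inr c)
  rw [Fmat, transpose_fromCols, fromRows_mulVec] at h2
  simpa [neg_mulVec] using h2

lemma quad_MWM {ι τ : Type*} [Fintype ι] [Fintype τ] (M : Matrix ι τ ℝ) (W : Matrix τ τ ℝ)
    (x : ι → ℝ) : x ⬝ᵥ (M * W * Mᵀ) *ᵥ x = (Mᵀ *ᵥ x) ⬝ᵥ W *ᵥ (Mᵀ *ᵥ x) := by
  rw [← mulVec_mulVec, ← mulVec_mulVec, dotProduct_mulVec x M, ← mulVec_transpose]

section Data
variable {m mv : ℕ} (l N : ℕ) (Amats Bmats : Fin l → Matrix (Fin m) (Fin m) ℝ)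
  (D : Matrix (Fin m) (Fin m) ℝ) (Bv : Matrix (Fin m) (Fin mv) ℝ)
  (Q : Matrix (Fin (N - l)) (Fin (N - l)) ℝ) (S : Matrix (Fin (N - l)) (Fin mv) ℝ)
  (R : Matrix (Fin mv) (Fin mv) ℝ)
  (u y : ℕ → Fin m → ℝ) (v : ℕ → Fin mv → ℝ)

/-- Data identity: F·M = (−Bᵥ V, −I). -/
lemma Fmat_mul_Mdata
    (hdata : ∀ k, l ≤ k → k < N →
      y k = -(∑ i : Fin l, (Amats i).mulVec (y (k - l + (i : ℕ))))
        + D.mulVec (u k) + (∑ i : Fin l, (Bmats i).mulVec (u (k - l + (i : ℕ))))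
        + Bv.mulVec (v k)) :
    Fmat l Amats Bmats D * Mdata l N u y
      = Matrix.fromCols (-(Bv * Matrix.of (fun a (j : Fin (N - l)) => v (l + (j : ℕ)) a)))
          (-1) := by
  rw [Mdata, Fmat, ← fromRows_fromCols_eq_fromBlocks, fromCols_mul_fromRows,
    mul_fromCols, mul_fromCols, fromCols_mul_fromRows]
  have hz : Ctil l Amats Bmats * XiMat l N u y + D * UXi m l N u - UXi m l N y
      = -(Bv * Matrix.of (fun a (j : Fin (N - l)) => v (l + (j : ℕ)) a)) := by
    ext a j
    have hjN : l + (j : ℕ) < N := by omega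
    have hd := congrFun (hdata (l + (j : ℕ)) (Nat.le_add_right l j) hjN) a
    simp only [Pi.add_apply, Pi.neg_apply, Finset.sum_apply, Matrix.mulVec,
      dotProduct] at hd
    simp only [Matrix.sub_apply, Matrix.add_apply, Matrix.neg_apply, Matrix.mul_apply,
      Ctil, XiMat, UXi, Matrix.of_apply, xi, Fintype.sum_sum_type,
      Fintype.sum_prod_type, Sum.elim_inl, Sum.elim_inr, neg_mul, Finset.sum_neg_distrib]
    rw [hd]
    ring
  rw [Matrix.mul_zero, Matrix.mul_one, Matrix.neg_mul, Matrix.one_mul]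
  ext a c
  cases c with
  | inl c =>
      have := congrFun (congrFun hz a) c
      simp only [Matrix.sub_apply, Matrix.add_apply, Matrix.neg_apply] at this ⊢
      simp only [Matrix.fromCols, Matrix.add_apply, Matrix.of_apply, Sum.elim_inl,
        Matrix.neg_apply]
      linarith
  | inr c =>
      simp [Matrix.fromCols]

end Data

section Data2
variable {m mv : ℕ} (l N : ℕ) (Amats Bmats : Fin l → Matrix (Fin m) (Fin m) ℝ)
  (D : Matrix (Fin m) (Fin m) ℝ) (Bv : Matrix (Fin m) (Fin mv) ℝ)
  (Q : Matrix (Fin (N - l)) (Fin (N - l)) ℝ) (S : Matrix (Fin (N - l)) (Fin mv) ℝ)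
  (R : Matrix (Fin mv) (Fin mv) ℝ)
  (u y : ℕ → Fin m → ℝ) (v : ℕ → Fin mv → ℝ)

lemma QSRbar_symm (hQ : Q.IsSymm) (hR : R.IsSymm) :
    (QSRbar l N u y Q S R Bv)ᵀ = QSRbar l N u y Q S R Bv := by
  have hW : (Wmat Q S R Bv)ᵀ = Wmat Q S R Bv := by
    simp [Wmat, fromBlocks_transpose, transpose_mul, hQ.eq, hR.eq, Matrix.mul_assoc]
  rw [QSRbar, transpose_mul, transpose_mul, transpose_transpose, hW, Matrix.mul_assoc]

lemma hposQSR
    (hdata : ∀ k, l ≤ k → k < N →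
      y k = -(∑ i : Fin l, (Amats i).mulVec (y (k - l + (i : ℕ))))
        + D.mulVec (u k) + (∑ i : Fin l, (Bmats i).mulVec (u (k - l + (i : ℕ))))
        + Bv.mulVec (v k))
    (hV : inNoiseSet Q S R (Matrix.of fun a (j : Fin (N - l)) => v (l + (j : ℕ)) a)) :
    ∀ a : Fin m → ℝ,
      0 ≤ ((Fmat l Amats Bmats D)ᵀ *ᵥ a) ⬝ᵥ (QSRbar l N u y Q S R Bv) *ᵥ
          ((Fmat l Amats Bmats D)ᵀ *ᵥ a) := by
  intro a
  set V : Matrix (Fin mv) (Fin (N - l)) ℝ :=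
    Matrix.of fun a (j : Fin (N - l)) => v (l + (j : ℕ)) a with hVdef
  set c : Fin mv → ℝ := Bvᵀ *ᵥ a with hc
  set p : Fin (N - l) → ℝ := Vᵀ *ᵥ c with hp
  have key := Fmat_mul_Mdata l N Amats Bmats D Bv u y v hdata
  rw [QSRbar, quad_MWM]
  have hw : (Mdata l N u y)ᵀ *ᵥ ((Fmat l Amats Bmats D)ᵀ *ᵥ a) = -(p ⊕ᵥ a) := by
    rw [mulVec_mulVec, ← transpose_mul, key, transpose_fromCols, fromRows_mulVec]
    simp only [transpose_neg, transpose_mul, transpose_one, neg_mulVec, one_mulVec,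
      ← mulVec_mulVec]
    funext d
    cases d with
    | inl d => simp [hp, hc, hVdef]
    | inr d => simp
  rw [hw, neg_dotProduct, mulVec_neg, dotProduct_neg, neg_neg]
  rw [Wmat, fromBlocks_mulVec, sumElim_dotProduct_sumElim]
  simp only [Sum.elim_comp_inl, Sum.elim_comp_inr]
  have hVq := hV.2 c
  rw [show ((Matrix.fromRows Vᵀ (1 : Matrix (Fin mv) (Fin mv) ℝ))ᵀ * Matrix.fromBlocks Q S Sᵀ R
        * Matrix.fromRows Vᵀ (1 : Matrix (Fin mv) (Fin mv) ℝ))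
      = (Matrix.fromRows Vᵀ (1 : Matrix (Fin mv) (Fin mv) ℝ))ᵀ * Matrix.fromBlocks Q S Sᵀ R
        * ((Matrix.fromRows Vᵀ (1 : Matrix (Fin mv) (Fin mv) ℝ))ᵀ)ᵀ
      from by rw [transpose_transpose], quad_MWM, transpose_transpose, fromRows_mulVec,
    one_mulVec, fromBlocks_mulVec, sumElim_dotProduct_sumElim] at hVq
  simp only [Sum.elim_comp_inl, Sum.elim_comp_inr] at hVq
  have e1 : (S * Bvᵀ) *ᵥ a = S *ᵥ c := by rw [← mulVec_mulVec]
  have e2 : a ⬝ᵥ ((Bv * Sᵀ) *ᵥ p) = c ⬝ᵥ (Sᵀ *ᵥ p) := by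
    rw [← mulVec_mulVec, dotProduct_mulVec a Bv, ← mulVec_transpose]
  have e3 : a ⬝ᵥ ((Bv * R * Bvᵀ) *ᵥ a) = c ⬝ᵥ (R *ᵥ c) := by
    rw [quad_MWM]
  simp only [dotProduct_add] at hVq ⊢
  rw [e1, e2, e3, hp]
  linarith [hVq]

lemma kerF_neg (hQn : IsNegDef Q) (hR : R.IsSymm)
    (hdata : ∀ k, l ≤ k → k < N →
      y k = -(∑ i : Fin l, (Amats i).mulVec (y (k - l + (i : ℕ))))
        + D.mulVec (u k) + (∑ i : Fin l, (Bmats i).mulVec (u (k - l + (i : ℕ))))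
        + Bv.mulVec (v k))
    (hV : inNoiseSet Q S R (Matrix.of fun a (j : Fin (N - l)) => v (l + (j : ℕ)) a))
    (hinv : IsUnit (QSRbar l N u y Q S R Bv).det) :
    ∀ z, (Fmat l Amats Bmats D) *ᵥ z = 0 →
      z ⬝ᵥ (QSRbar l N u y Q S R Bv)⁻¹ *ᵥ z ≤ 0 := by
  apply dual_neg (QSRbar_symm l N Bv Q S R u y hQn.1 hR) hinv _
    (Fmat_transpose_inj l Amats Bmats D)
    (hposQSR l N Amats Bmats D Bv Q S R u y v hdata hV)
  intro T hT
  have h := negBeyond_MWM (M := Mdata l N u y) (Q := Q) (S * Bvᵀ) (Bv * Sᵀ) (Bv * R * Bvᵀ)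
    (fun q hq => hQn.2 q hq) (by
      have heq : Mdata l N u y * Matrix.fromBlocks Q (S * Bvᵀ) (Bv * Sᵀ) (Bv * R * Bvᵀ)
          * (Mdata l N u y)ᵀ = QSRbar l N u y Q S R Bv := rfl
      rw [heq]; exact hinv) T hT
  exact h

end Data2

/-! ### System-theoretic lemmas -/

section Sys

lemma act_apply {a b : ℕ} (M : Matrix (Fin a) (Fin b) ℝ) (v : Evec b) (i : Fin a) :
    act M v i = ∑ j, (M i j : ℂ) * v j := rfl

lemma act_mul {a b c : ℕ} (M : Matrix (Fin a) (Fin b) ℝ) (Nm : Matrix (Fin b) (Fin c) ℝ)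
    (v : Evec c) : act (M * Nm) v = act M (act Nm v) := by
  ext i
  simp only [act_apply, Matrix.mul_apply]
  push_cast
  simp only [Finset.sum_mul, Finset.mul_sum]
  rw [Finset.sum_comm]
  exact Finset.sum_congr rfl fun j _ => Finset.sum_congr rfl fun k _ => by ring

lemma act_add {a b : ℕ} (M : Matrix (Fin a) (Fin b) ℝ) (v w : Evec b) :
    act M (v + w) = act M v + act M w := map_add (Matrix.toEuclideanLin (M.map Complex.ofReal)) v w

lemma act_sum {a b : ℕ} (M : Matrix (Fin a) (Fin b) ℝ) {ι : Type*} (s : Finset ι)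
    (f : ι → Evec b) : act M (∑ i ∈ s, f i) = ∑ i ∈ s, act M (f i) :=
  map_sum (Matrix.toEuclideanLin (M.map Complex.ofReal)) f s

lemma phi_act {a b : ℕ} (φ : ℂ →ₗ[ℝ] ℝ) (M : Matrix (Fin a) (Fin b) ℝ) (v : Evec b) (i : Fin a) :
    φ (act M v i) = ∑ j, M i j * φ (v j) := by
  rw [act_apply, map_sum]
  refine Finset.sum_congr rfl fun j _ => ?_
  rw [← Complex.real_smul, LinearMap.map_smul, smul_eq_mul]

/-- The output satisfies the difference-operator relation (consequence of `hdiff`). -/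
lemma output_hdiff {n m : ℕ} (A : Matrix (Fin n) (Fin n) ℝ) (B : Matrix (Fin n) (Fin m) ℝ)
    (C : Matrix (Fin m) (Fin n) ℝ) (D : Matrix (Fin m) (Fin m) ℝ)
    (l : ℕ) (Amats Bmats : Fin l → Matrix (Fin m) (Fin m) ℝ)
    (hdiff : ∀ (x : ℕ → Evec n) (uc yc : ℕ → Evec m),
      (∀ k, x (k + 1) = act A (x k) + act B (uc k)) →
      (∀ k, yc k = act C (x k) + act D (uc k)) →
      ∀ k, l ≤ k →
        yc k = -(∑ i : Fin l, act (Amats i) (yc (k - l + (i : ℕ))))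
          + act D (uc k) + ∑ i : Fin l, act (Bmats i) (uc (k - l + (i : ℕ))))
    (u : ℕ → Evec m) :
    ∀ k, l ≤ k →
      output A B C D u k = -(∑ i : Fin l, act (Amats i) (output A B C D u (k - l + (i : ℕ))))
        + act D (u k) + ∑ i : Fin l, act (Bmats i) (u (k - l + (i : ℕ))) := by
  set x : ℕ → Evec n := fun k => ∑ i ∈ Finset.range k, act (A ^ (k - 1 - i) * B) (u i) with hx
  have h1 : ∀ k, x (k + 1) = act A (x k) + act B (u k) := by
    intro k
    show (∑ i ∈ Finset.range (k + 1), act (A ^ (k + 1 - 1 - i) * B) (u i)) = _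
    rw [Finset.sum_range_succ]
    have e1 : ∀ i ∈ Finset.range k,
        act (A ^ (k + 1 - 1 - i) * B) (u i) = act A (act (A ^ (k - 1 - i) * B) (u i)) := by
      intro i hi
      rw [Finset.mem_range] at hi
      rw [← act_mul, ← Matrix.mul_assoc, ← pow_succ']
      have he : k + 1 - 1 - i = k - 1 - i + 1 := by omega
      rw [he]
    rw [Finset.sum_congr rfl e1]
    have e2 : act (A ^ (k + 1 - 1 - k) * B) (u k) = act B (u k) := by
      have he : k + 1 - 1 - k = 0 := by omega
      rw [he, pow_zero, Matrix.one_mul]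
    rw [e2]
    congr 1
    rw [hx]
    simp only
    rw [act_sum]
  have h2 : ∀ k, output A B C D u k = act C (x k) + act D (u k) := by
    intro k
    rw [output, add_comm]
    congr 1
    rw [hx]
    simp only
    rw [act_sum]
    exact Finset.sum_congr rfl fun i _ => by rw [← act_mul, Matrix.mul_assoc]
  exact hdiff x u (output A B C D u) h1 h2

/-- Output of the shifted input is the shifted output. -/
lemma output_shift {n m : ℕ} (A : Matrix (Fin n) (Fin n) ℝ) (B : Matrix (Fin n) (Fin m) ℝ)
    (C : Matrix (Fin m) (Fin n) ℝ) (D : Matrix (Fin m) (Fin m) ℝ) (l : ℕ)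
    (u : ℕ → Evec m) (k : ℕ) :
    output A B C D (fun j => if j < l then 0 else u (j - l)) k
      = if k < l then 0 else output A B C D u (k - l) := by
  set u' : ℕ → Evec m := fun j => if j < l then 0 else u (j - l) with hu'
  by_cases hk : k < l
  · rw [if_pos hk, output]
    have hz1 : u' k = 0 := if_pos hk
    have hz2 : ∀ i ∈ Finset.range k, act (C * A ^ (k - 1 - i) * B) (u' i) = 0 := by
      intro i hi
      rw [Finset.mem_range] at hi
      have : u' i = 0 := if_pos (by omega)
      rw [this, act_zero]
    rw [hz1, act_zero, Finset.sum_congr rfl hz2, Finset.sum_const, smul_zero, add_zero]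
  · rw [if_neg hk]
    push_neg at hk
    rw [output, output]
    have hz1 : u' k = u (k - l) := if_neg (by omega)
    rw [hz1]
    congr 1
    have hsub : Finset.Ico l k ⊆ Finset.range k := by
      intro i hi
      rw [Finset.mem_Ico] at hi
      rw [Finset.mem_range]
      omega
    rw [← Finset.sum_subset hsub (fun i hi hni => by
      rw [Finset.mem_range] at hi
      rw [Finset.mem_Ico] at hni
      have hil : i < l := by omega
      rw [show u' i = (0 : Evec m) from if_pos hil, act_zero])]
    rw [Finset.sum_Ico_eq_sum_range]
    refine Finset.sum_congr rfl fun i hi => ?_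
    rw [Finset.mem_range] at hi
    have h1 : u' (l + i) = u i := by
      have hni : ¬ (l + i < l) := by omega
      show (if l + i < l then (0 : Evec m) else u (l + i - l)) = u i
      rw [if_neg hni]
      have he : l + i - l = i := by omega
      rw [he]
    rw [h1]
    have he2 : k - 1 - (l + i) = k - l - 1 - i := by omega
    rw [he2]

end Sys

/-! ### Quadratic form of G and the shift -/

section Forms

lemma sum_pair_ite {l m : ℕ} (i : Fin l) (a : Fin m) (g : Fin l × Fin m → ℝ)
    (h : (i : ℕ) + 1 < l) :
    ∑ x : Fin l × Fin m, (if (i : ℕ) + 1 = (x.1 : ℕ) ∧ a = x.2 then (1:ℝ) else 0) * g x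
      = g (⟨(i : ℕ) + 1, h⟩, a) := by
  rw [Finset.sum_eq_single ((⟨(i : ℕ) + 1, h⟩ : Fin l), a)]
  · rw [if_pos ⟨rfl, rfl⟩, one_mul]
  · intro b _ hb
    rw [if_neg, zero_mul]
    rintro ⟨h1, h2⟩
    exact hb (Prod.ext (Fin.ext h1.symm) h2.symm)
  · intro hmem
    exact absurd (Finset.mem_univ _) hmem

lemma sum_pair_ite_zero {l m : ℕ} (i : Fin l) (a : Fin m) (g : Fin l × Fin m → ℝ)
    (h : ¬ ((i : ℕ) + 1 < l)) :
    ∑ x : Fin l × Fin m, (if (i : ℕ) + 1 = (x.1 : ℕ) ∧ a = x.2 then (1:ℝ) else 0) * g x = 0 := by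
  refine Finset.sum_eq_zero fun x _ => ?_
  rw [if_neg, zero_mul]
  rintro ⟨h1, h2⟩
  exact absurd (h1 ▸ x.1.isLt) h

lemma sum_single_ite {l m : ℕ} (i : Fin l) (a : Fin m) (w : Fin m → ℝ)
    (h : (i : ℕ) + 1 = l) :
    ∑ a' : Fin m, (if (i : ℕ) + 1 = l ∧ a = a' then (1:ℝ) else 0) * w a' = w a := by
  rw [Finset.sum_eq_single a]
  · rw [if_pos ⟨h, rfl⟩, one_mul]
  · intro b _ hb
    rw [if_neg, zero_mul]
    rintro ⟨_, h2⟩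
    exact hb h2.symm
  · intro hmem
    exact absurd (Finset.mem_univ _) hmem

lemma sum_single_ite_zero {l m : ℕ} (i : Fin l) (a : Fin m) (w : Fin m → ℝ)
    (h : (i : ℕ) + 1 ≠ l) :
    ∑ a' : Fin m, (if (i : ℕ) + 1 = l ∧ a = a' then (1:ℝ) else 0) * w a' = 0 := by
  refine Finset.sum_eq_zero fun x _ => ?_
  rw [if_neg, zero_mul]
  rintro ⟨h1, _⟩
  exact h h1

lemma Kshift_mulVec (l m : ℕ) (ξ : rindex l m → ℝ) (u ψ : Fin m → ℝ) :
    Kshift l m *ᵥ ((ξ ⊕ᵥ u) ⊕ᵥ ψ)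
      = Sum.elim
          (fun p : Fin l × Fin m => if h : (p.1 : ℕ) + 1 < l
            then ξ (Sum.inl (⟨(p.1 : ℕ) + 1, h⟩, p.2)) else u p.2)
          (fun p : Fin l × Fin m => if h : (p.1 : ℕ) + 1 < l
            then ξ (Sum.inr (⟨(p.1 : ℕ) + 1, h⟩, p.2)) else ψ p.2) := by
  funext r
  have expand : ∀ r', (Kshift l m *ᵥ ((ξ ⊕ᵥ u) ⊕ᵥ ψ)) r'
      = (∑ x : Fin l × Fin m, Kshift l m r' (Sum.inl (Sum.inl (Sum.inl x))) * ξ (Sum.inl x)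
        + ∑ x : Fin l × Fin m, Kshift l m r' (Sum.inl (Sum.inl (Sum.inr x))) * ξ (Sum.inr x)
        + ∑ a' : Fin m, Kshift l m r' (Sum.inl (Sum.inr a')) * u a')
        + ∑ a' : Fin m, Kshift l m r' (Sum.inr a') * ψ a' := by
    intro r'
    show ∑ c, Kshift l m r' c * ((ξ ⊕ᵥ u) ⊕ᵥ ψ) c = _
    rw [Fintype.sum_sum_type, Fintype.sum_sum_type, Fintype.sum_sum_type]
    simp only [Sum.elim_inl, Sum.elim_inr]
  rw [expand]
  cases r with
  | inl p =>
    obtain ⟨i, a⟩ := p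
    have k1 : ∀ x : Fin l × Fin m, Kshift l m (Sum.inl (i, a)) (Sum.inl (Sum.inl (Sum.inl x)))
        = (if (i : ℕ) + 1 = (x.1 : ℕ) ∧ a = x.2 then (1:ℝ) else 0) := fun x => rfl
    have k2 : ∀ x : Fin l × Fin m, Kshift l m (Sum.inl (i, a)) (Sum.inl (Sum.inl (Sum.inr x)))
        = (0:ℝ) := fun x => rfl
    have k3 : ∀ a' : Fin m, Kshift l m (Sum.inl (i, a)) (Sum.inl (Sum.inr a'))
        = (if (i : ℕ) + 1 = l ∧ a = a' then (1:ℝ) else 0) := fun a' => rfl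
    have k4 : ∀ a' : Fin m, Kshift l m (Sum.inl (i, a)) (Sum.inr a') = (0:ℝ) := fun a' => rfl
    simp only [k1, k2, k3, k4, zero_mul, Finset.sum_const_zero, add_zero, zero_add,
      Sum.elim_inl]
    by_cases h : (i : ℕ) + 1 < l
    · rw [sum_pair_ite i a _ h, sum_single_ite_zero i a _ (by omega), dif_pos h, add_zero]
    · rw [sum_pair_ite_zero i a _ h, sum_single_ite i a _ (by omega), dif_neg h, zero_add]
  | inr p =>
    obtain ⟨i, a⟩ := p
    have k1 : ∀ x : Fin l × Fin m, Kshift l m (Sum.inr (i, a)) (Sum.inl (Sum.inl (Sum.inl x)))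
        = (0:ℝ) := fun x => rfl
    have k2 : ∀ x : Fin l × Fin m, Kshift l m (Sum.inr (i, a)) (Sum.inl (Sum.inl (Sum.inr x)))
        = (if (i : ℕ) + 1 = (x.1 : ℕ) ∧ a = x.2 then (1:ℝ) else 0) := fun x => rfl
    have k3 : ∀ a' : Fin m, Kshift l m (Sum.inr (i, a)) (Sum.inl (Sum.inr a')) = (0:ℝ) :=
      fun a' => rfl
    have k4 : ∀ a' : Fin m, Kshift l m (Sum.inr (i, a)) (Sum.inr a')
        = (if (i : ℕ) + 1 = l ∧ a = a' then (1:ℝ) else 0) := fun a' => rfl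
    simp only [k1, k2, k3, k4, zero_mul, Finset.sum_const_zero, add_zero, zero_add,
      Sum.elim_inr]
    by_cases h : (i : ℕ) + 1 < l
    · rw [sum_pair_ite i a _ h, sum_single_ite_zero i a _ (by omega), dif_pos h, add_zero]
    · rw [sum_pair_ite_zero i a _ h, sum_single_ite i a _ (by omega), dif_neg h, zero_add]

lemma Gform {l m : ℕ} (P : Matrix (rindex l m) (rindex l m) ℝ)
    (Λ Ψ : Matrix (Fin m) (Fin m) ℝ) (ξ : rindex l m → ℝ) (u ψ : Fin m → ℝ) :
    ((ξ ⊕ᵥ u) ⊕ᵥ ψ) ⬝ᵥ ((Gmat l m)ᵀ * PhiMat P Λ Ψ * Gmat l m) *ᵥ ((ξ ⊕ᵥ u) ⊕ᵥ ψ)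
    = -(ξ ⬝ᵥ P *ᵥ ξ)
      + (Kshift l m *ᵥ ((ξ ⊕ᵥ u) ⊕ᵥ ψ)) ⬝ᵥ P *ᵥ (Kshift l m *ᵥ ((ξ ⊕ᵥ u) ⊕ᵥ ψ))
      + u ⬝ᵥ Λ *ᵥ u + ψ ⬝ᵥ Ψ *ᵥ ψ := by
  have h1 : (Gmat l m)ᵀ * PhiMat P Λ Ψ * Gmat l m
      = (Gmat l m)ᵀ * PhiMat P Λ Ψ * ((Gmat l m)ᵀ)ᵀ := by rw [transpose_transpose]
  rw [h1, quad_MWM, transpose_transpose]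
  have hG : Gmat l m *ᵥ ((ξ ⊕ᵥ u) ⊕ᵥ ψ)
      = ((ξ ⊕ᵥ (Kshift l m *ᵥ ((ξ ⊕ᵥ u) ⊕ᵥ ψ))) ⊕ᵥ (u ⊕ᵥ ψ)) := by
    rw [Gmat, fromRows_mulVec, fromRows_mulVec, fromRows_mulVec]
    simp only [fromCols_mulVec_sumElim, zero_mulVec, add_zero, zero_add, one_mulVec]
  rw [hG, PhiMat, fromBlocks_mulVec, sumElim_dotProduct_sumElim]
  simp only [Sum.elim_comp_inl, Sum.elim_comp_inr, zero_mulVec, add_zero, zero_add]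
  rw [fromBlocks_mulVec, fromBlocks_mulVec, sumElim_dotProduct_sumElim,
    sumElim_dotProduct_sumElim]
  simp only [Sum.elim_comp_inl, Sum.elim_comp_inr, zero_mulVec, add_zero, zero_add,
    neg_mulVec, dotProduct_neg]
  ring

end Forms

/-! ### Dissipation and telescoping -/

noncomputable def qfphi {m : ℕ} (φ : ℂ →ₗ[ℝ] ℝ) (Λ : Matrix (Fin m) (Fin m) ℝ)
    (v : Evec m) : ℝ :=
  (fun a => φ (v a)) ⬝ᵥ Λ *ᵥ (fun a => φ (v a))

noncomputable def qf {m : ℕ} (Λ : Matrix (Fin m) (Fin m) ℝ) (v : Evec m) : ℝ :=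
  qfphi Complex.reLm Λ v + qfphi Complex.imLm Λ v

def xivD (l : ℕ) {m : ℕ} (u' y' : ℕ → Evec m) (φ : ℂ →ₗ[ℝ] ℝ) (k : ℕ) : rindex l m → ℝ :=
  Sum.elim (fun p => φ (u' (k - l + (p.1 : ℕ)) p.2)) (fun p => φ (y' (k - l + (p.1 : ℕ)) p.2))

def pvD {m : ℕ} (φ : ℂ →ₗ[ℝ] ℝ) (f : ℕ → Evec m) (k : ℕ) : Fin m → ℝ := fun a => φ (f k a)

def zvD (l : ℕ) {m : ℕ} (u' y' : ℕ → Evec m) (φ : ℂ →ₗ[ℝ] ℝ) (k : ℕ) :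
    (rindex l m ⊕ Fin m) ⊕ Fin m → ℝ :=
  ((xivD l u' y' φ k ⊕ᵥ pvD φ u' k) ⊕ᵥ pvD φ y' k)

section Key
variable {l m : ℕ}

lemma coord_le_norm {m : ℕ} (v : Evec m) (a : Fin m) : ‖v a‖ ≤ ‖v‖ := by
  rw [EuclideanSpace.norm_eq]
  rw [show ‖v a‖ = Real.sqrt (‖v a‖ ^ 2) from (Real.sqrt_sq (norm_nonneg _)).symm]
  apply Real.sqrt_le_sqrt
  exact Finset.single_le_sum (f := fun b => ‖v b‖ ^ 2) (fun b _ => by positivity)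
    (Finset.mem_univ a)

lemma tendsto_quad {ι : Type*} [Fintype ι] (P : Matrix ι ι ℝ) (x : ℕ → ι → ℝ)
    (hx : ∀ r, Tendsto (fun K => x K r) atTop (𝓝 0)) :
    Tendsto (fun K => x K ⬝ᵥ P *ᵥ x K) atTop (𝓝 0) := by
  have hrw : (fun K => x K ⬝ᵥ P *ᵥ x K) = fun K => ∑ r, x K r * ∑ s, P r s * x K s := rfl
  rw [hrw]
  have hmain := tendsto_finset_sum (f := fun r K => x K r * ∑ s, P r s * x K s)
    (x := atTop) (a := fun _ => (0:ℝ)) Finset.univ (fun r _ => by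
      have hs : Tendsto (fun K => ∑ s, P r s * x K s) atTop (𝓝 0) := by
        have h2 := tendsto_finset_sum (f := fun s K => P r s * x K s)
          (x := atTop) (a := fun _ => (0:ℝ)) Finset.univ
          (fun s _ => by simpa using (hx s).const_mul (P r s))
        simpa using h2
      simpa using (hx r).mul hs)
  simpa using hmain

lemma key_bound (l m : ℕ)
    (Amats Bmats : Fin l → Matrix (Fin m) (Fin m) ℝ) (D : Matrix (Fin m) (Fin m) ℝ)
    (P : Matrix (rindex l m) (rindex l m) ℝ) (Λ Ψ : Matrix (Fin m) (Fin m) ℝ)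
    (μ : ℝ) (hμ : 0 ≤ μ)
    (Ninv : Matrix ((rindex l m ⊕ Fin m) ⊕ Fin m) ((rindex l m ⊕ Fin m) ⊕ Fin m) ℝ)
    (hlmi : IsNegSemidef ((Gmat l m)ᵀ * PhiMat P Λ Ψ * Gmat l m - μ • Ninv))
    (hker : ∀ z, (Fmat l Amats Bmats D) *ᵥ z = 0 → z ⬝ᵥ Ninv *ᵥ z ≤ 0)
    (u' y' : ℕ → Evec m)
    (hzero : ∀ k, k < l → u' k = 0) (hzeroy : ∀ k, k < l → y' k = 0)
    (hrel : ∀ k, l ≤ k →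
      y' k = -(∑ i : Fin l, act (Amats i) (y' (k - l + (i : ℕ))))
        + act D (u' k) + ∑ i : Fin l, act (Bmats i) (u' (k - l + (i : ℕ))))
    (hun : Tendsto (fun k => ‖u' k‖) atTop (𝓝 0))
    (hyn : Tendsto (fun k => ‖y' k‖) atTop (𝓝 0)) :
    ∃ W : ℕ → ℝ, Tendsto W atTop (𝓝 0) ∧
      ∀ K, l ≤ K → (∑ k ∈ Finset.range K, (qf Λ (u' k) + qf Ψ (y' k))) ≤ W K := by
  classical
  -- the shift identity
  have hshift : ∀ (φ : ℂ →ₗ[ℝ] ℝ) (k : ℕ), l ≤ k →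
      Kshift l m *ᵥ zvD l u' y' φ k = xivD l u' y' φ (k + 1) := by
    intro φ k hk
    rw [zvD, Kshift_mulVec]
    funext r
    cases r with
    | inl p =>
      obtain ⟨i, a⟩ := p
      show (if h : (i : ℕ) + 1 < l then xivD l u' y' φ k (Sum.inl (⟨(i:ℕ)+1, h⟩, a))
        else pvD φ u' k a) = xivD l u' y' φ (k+1) (Sum.inl (i, a))
      split_ifs with h
      · show φ (u' (k - l + ((i : ℕ) + 1)) a) = φ (u' (k + 1 - l + (i : ℕ)) a)
        have he : k - l + ((i : ℕ) + 1) = k + 1 - l + (i : ℕ) := by omega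
        rw [he]
      · show φ (u' k a) = φ (u' (k + 1 - l + (i : ℕ)) a)
        have hil := i.isLt
        have he : k + 1 - l + (i : ℕ) = k := by omega
        rw [he]
    | inr p =>
      obtain ⟨i, a⟩ := p
      show (if h : (i : ℕ) + 1 < l then xivD l u' y' φ k (Sum.inr (⟨(i:ℕ)+1, h⟩, a))
        else pvD φ y' k a) = xivD l u' y' φ (k+1) (Sum.inr (i, a))
      split_ifs with h
      · show φ (y' (k - l + ((i : ℕ) + 1)) a) = φ (y' (k + 1 - l + (i : ℕ)) a)
        have he : k - l + ((i : ℕ) + 1) = k + 1 - l + (i : ℕ) := by omega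
        rw [he]
      · show φ (y' k a) = φ (y' (k + 1 - l + (i : ℕ)) a)
        have hil := i.isLt
        have he : k + 1 - l + (i : ℕ) = k := by omega
        rw [he]
  -- the kernel identity
  have hkerz : ∀ (φ : ℂ →ₗ[ℝ] ℝ) (k : ℕ), l ≤ k →
      (Fmat l Amats Bmats D) *ᵥ zvD l u' y' φ k = 0 := by
    intro φ k hk
    rw [zvD, Fmat, fromCols_mulVec_sumElim, fromCols_mulVec_sumElim, neg_mulVec,
      one_mulVec]
    funext a
    simp only [Pi.add_apply, Pi.neg_apply, Pi.zero_apply]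
    have hsa : ∀ (f : Fin l → Evec m), (∑ i, f i) a = ∑ i, f i a :=
      fun f => by rw [WithLp.ofLp_sum]; exact Finset.sum_apply a Finset.univ _
    have hy : y' k a = -((∑ i : Fin l, act (Amats i) (y' (k - l + (i : ℕ)))) a)
        + act D (u' k) a + (∑ i : Fin l, act (Bmats i) (u' (k - l + (i : ℕ)))) a := by
      rw [hrel k hk]
      rfl
    have hyφ : φ (y' k a)
        = -(∑ i : Fin l, ∑ j, Amats i a j * φ (y' (k - l + (i : ℕ)) j))
          + (∑ j, D a j * φ (u' k j))
          + ∑ i : Fin l, ∑ j, Bmats i a j * φ (u' (k - l + (i : ℕ)) j) := by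
      rw [hy, hsa, hsa, map_add, map_add, map_neg, map_sum, map_sum]
      simp only [phi_act]
    have hC : (Ctil l Amats Bmats *ᵥ xivD l u' y' φ k) a
        = (∑ i : Fin l, ∑ j, Bmats i a j * φ (u' (k - l + (i : ℕ)) j))
          - ∑ i : Fin l, ∑ j, Amats i a j * φ (y' (k - l + (i : ℕ)) j) := by
      show ∑ r, Ctil l Amats Bmats a r * xivD l u' y' φ k r = _
      rw [Fintype.sum_sum_type]
      simp only [Fintype.sum_prod_type]
      have hA : ∀ (i : Fin l) (j : Fin m),
          Ctil l Amats Bmats a (Sum.inr (i, j)) * xivD l u' y' φ k (Sum.inr (i, j))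
          = -(Amats i a j * φ (y' (k - l + (i : ℕ)) j)) := fun i j => by
        show (-Amats i a j) * φ (y' (k - l + (i : ℕ)) j) = _
        ring
      have hB : ∀ (i : Fin l) (j : Fin m),
          Ctil l Amats Bmats a (Sum.inl (i, j)) * xivD l u' y' φ k (Sum.inl (i, j))
          = Bmats i a j * φ (u' (k - l + (i : ℕ)) j) := fun i j => rfl
      simp only [hA, hB, Finset.sum_neg_distrib]
      ring
    have hD : (D *ᵥ pvD φ u' k) a = ∑ j, D a j * φ (u' k j) := rfl
    rw [hC, hD]
    have : φ (y' k a) = pvD φ y' k a := rfl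
    rw [← this, hyφ]
    ring
  -- the dissipation step
  have hstep : ∀ (φ : ℂ →ₗ[ℝ] ℝ) (k : ℕ), l ≤ k →
      xivD l u' y' φ (k+1) ⬝ᵥ P *ᵥ xivD l u' y' φ (k+1)
        - xivD l u' y' φ k ⬝ᵥ P *ᵥ xivD l u' y' φ k
        + pvD φ u' k ⬝ᵥ Λ *ᵥ pvD φ u' k + pvD φ y' k ⬝ᵥ Ψ *ᵥ pvD φ y' k ≤ 0 := by
    intro φ k hk
    have h0 := hlmi.2 (zvD l u' y' φ k)
    rw [sub_mulVec, dotProduct_sub, smul_mulVec, dotProduct_smul, smul_eq_mul] at h0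
    have hn := hker _ (hkerz φ k hk)
    have h2 : zvD l u' y' φ k ⬝ᵥ ((Gmat l m)ᵀ * PhiMat P Λ Ψ * Gmat l m) *ᵥ zvD l u' y' φ k
        ≤ 0 := by nlinarith
    rw [show zvD l u' y' φ k = ((xivD l u' y' φ k ⊕ᵥ pvD φ u' k) ⊕ᵥ pvD φ y' k) from rfl,
      Gform] at h2
    rw [show ((xivD l u' y' φ k ⊕ᵥ pvD φ u' k) ⊕ᵥ pvD φ y' k) = zvD l u' y' φ k from rfl,
      hshift φ k hk] at h2
    linarith
  -- the candidate W
  refine ⟨fun K => -(xivD l u' y' Complex.reLm K ⬝ᵥ P *ᵥ xivD l u' y' Complex.reLm K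
      + xivD l u' y' Complex.imLm K ⬝ᵥ P *ᵥ xivD l u' y' Complex.imLm K), ?_, ?_⟩
  · -- tendsto
    have hent : ∀ (φ : ℂ →ₗ[ℝ] ℝ), (∀ z : ℂ, |φ z| ≤ ‖z‖) →
        ∀ r, Tendsto (fun K => xivD l u' y' φ K r) atTop (𝓝 0) := by
      intro φ hφ r
      have harg : ∀ i : ℕ, Tendsto (fun K : ℕ => K - l + i) atTop atTop :=
        fun i => tendsto_atTop_atTop.2 fun b => ⟨b + l, fun c hc => by omega⟩
      cases r with
      | inl p =>
        refine squeeze_zero_norm (fun K => ?_) ((hun.comp (harg (p.1 : ℕ))))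
        calc ‖xivD l u' y' φ K (Sum.inl p)‖ = |φ (u' (K - l + (p.1 : ℕ)) p.2)| := rfl
        _ ≤ ‖u' (K - l + (p.1 : ℕ)) p.2‖ := hφ _
        _ ≤ ‖u' (K - l + (p.1 : ℕ))‖ := coord_le_norm _ _
      | inr p =>
        refine squeeze_zero_norm (fun K => ?_) ((hyn.comp (harg (p.1 : ℕ))))
        calc ‖xivD l u' y' φ K (Sum.inr p)‖ = |φ (y' (K - l + (p.1 : ℕ)) p.2)| := rfl
        _ ≤ ‖y' (K - l + (p.1 : ℕ)) p.2‖ := hφ _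
        _ ≤ ‖y' (K - l + (p.1 : ℕ))‖ := coord_le_norm _ _
    have hre := tendsto_quad P _ (hent Complex.reLm (fun z => Complex.abs_re_le_norm z))
    have him := tendsto_quad P _ (hent Complex.imLm (fun z => Complex.abs_im_le_norm z))
    simpa using (hre.add him).neg
  · -- the bound by induction
    intro K hK
    show ∑ k ∈ Finset.range K, (qf Λ (u' k) + qf Ψ (y' k))
      ≤ -(xivD l u' y' Complex.reLm K ⬝ᵥ P *ᵥ xivD l u' y' Complex.reLm K
        + xivD l u' y' Complex.imLm K ⬝ᵥ P *ᵥ xivD l u' y' Complex.imLm K)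
    induction K, hK using Nat.le_induction with
    | base =>
      have hsum : ∑ k ∈ Finset.range l, (qf Λ (u' k) + qf Ψ (y' k)) = 0 := by
        refine Finset.sum_eq_zero fun k hk => ?_
        rw [Finset.mem_range] at hk
        rw [hzero k hk, hzeroy k hk]
        simp [qf, qfphi, dotProduct]
      have hxil : ∀ (φ : ℂ →ₗ[ℝ] ℝ), xivD l u' y' φ l = 0 := by
        intro φ
        funext r
        cases r with
        | inl p =>
          show φ (u' (l - l + (p.1 : ℕ)) p.2) = 0
          have he : l - l + (p.1 : ℕ) = (p.1 : ℕ) := by omega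
          rw [he, hzero _ p.1.isLt]
          simp
        | inr p =>
          show φ (y' (l - l + (p.1 : ℕ)) p.2) = 0
          have he : l - l + (p.1 : ℕ) = (p.1 : ℕ) := by omega
          rw [he, hzeroy _ p.1.isLt]
          simp
      rw [hsum, hxil Complex.reLm, hxil Complex.imLm]
      simp [dotProduct]
    | succ K hK ih =>
      rw [Finset.sum_range_succ]
      have h1 := hstep Complex.reLm K hK
      have h2 := hstep Complex.imLm K hK
      have hq : qf Λ (u' K) + qf Ψ (y' K)
          = (pvD Complex.reLm u' K ⬝ᵥ Λ *ᵥ pvD Complex.reLm u' K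
            + pvD Complex.reLm y' K ⬝ᵥ Ψ *ᵥ pvD Complex.reLm y' K)
          + (pvD Complex.imLm u' K ⬝ᵥ Λ *ᵥ pvD Complex.imLm u' K
            + pvD Complex.imLm y' K ⬝ᵥ Ψ *ᵥ pvD Complex.imLm y' K) := by
        have hqp : ∀ (φ : ℂ →ₗ[ℝ] ℝ) (Θ : Matrix (Fin m) (Fin m) ℝ) (f : ℕ → Evec m),
            qfphi φ Θ (f K) = pvD φ f K ⬝ᵥ Θ *ᵥ pvD φ f K := fun _ _ _ => rfl
        rw [qf, qf]
        simp only [hqp]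
        ring
      linarith
end Key

/-! ### ℓ₂-norm plumbing -/

section Enorm
variable {m : ℕ}

lemma tsum_sq_eq (f : ℕ → Evec m) :
    (∑' k, (‖f k‖₊ : ℝ≥0∞) ^ 2) = ∑' k, ((‖f k‖₊ ^ 2 : NNReal) : ℝ≥0∞) :=
  tsum_congr fun k => by rw [ENNReal.coe_pow]

lemma enorm2_ne_top_iff (f : ℕ → Evec m) :
    enorm2 f ≠ ⊤ ↔ Summable (fun k => ‖f k‖ ^ 2) := by
  have hfun : (fun k => ((‖f k‖₊ ^ 2 : NNReal) : ℝ)) = fun k => ‖f k‖ ^ 2 := by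
    funext k
    push_cast
    rfl
  have hiff : enorm2 f ≠ ⊤ ↔ (∑' k, (‖f k‖₊ : ℝ≥0∞) ^ 2) ≠ ⊤ := by
    rw [enorm2]
    constructor
    · intro h htop
      rw [htop] at h
      exact h (by rw [ENNReal.top_rpow_of_pos (by norm_num)])
    · intro h htop
      rw [ENNReal.rpow_eq_top_iff] at htop
      rcases htop with ⟨h0, hlt⟩ | ⟨ht, _⟩
      · norm_num at hlt
      · exact h ht
  rw [hiff, tsum_sq_eq, ENNReal.tsum_coe_ne_top_iff_summable, ← NNReal.summable_coe, hfun]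

lemma enorm2_eq_ofReal (f : ℕ → Evec m) (h : Summable fun k => ‖f k‖ ^ 2) :
    enorm2 f = (ENNReal.ofReal (∑' k, ‖f k‖ ^ 2)) ^ (1/2 : ℝ) := by
  rw [enorm2]
  congr 1
  rw [ENNReal.ofReal_tsum_of_nonneg (fun k => by positivity) h]
  exact tsum_congr fun k => by
    rw [ENNReal.ofReal_pow (norm_nonneg _), ofReal_norm]; rfl

lemma enorm2_ne_zero (f : ℕ → Evec m) (hne : f ≠ 0) : enorm2 f ≠ 0 := by
  obtain ⟨k, hk⟩ : ∃ k, f k ≠ 0 := by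
    by_contra h
    push_neg at h
    exact hne (funext h)
  intro h0
  rw [enorm2, ENNReal.rpow_eq_zero_iff] at h0
  have hsum0 : (∑' k, (‖f k‖₊ : ℝ≥0∞) ^ 2) = 0 := by
    rcases h0 with ⟨h, _⟩ | ⟨_, hneg⟩
    · exact h
    · norm_num at hneg
  have hle := ENNReal.le_tsum (f := fun k => (‖f k‖₊ : ℝ≥0∞) ^ 2) k
  rw [hsum0] at hle
  simp only [le_zero_iff, pow_eq_zero_iff, ENNReal.coe_eq_zero, nnnorm_eq_zero] at hle
  exact hk (by simpa using hle)

lemma enorm2_shift (f : ℕ → Evec m) (l : ℕ) :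
    enorm2 (fun k => if k < l then 0 else f (k - l)) = enorm2 f := by
  rw [enorm2, enorm2]
  congr 1
  refine tsum_eq_tsum_of_ne_zero_bij (fun x => (x : ℕ) + l) ?_ ?_ ?_
  · intro a b hab
    have h2 : (a : ℕ) + l = (b : ℕ) + l := hab
    exact Subtype.ext (by omega)
  · intro k hk
    rw [Function.mem_support] at hk
    have hkl : ¬ k < l := by
      intro hkl
      apply hk
      rw [if_pos hkl]
      simp
    refine ⟨⟨k - l, ?_⟩, by simp only; omega⟩
    rw [Function.mem_support]
    intro h
    apply hk
    rw [if_neg hkl]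
    exact h
  · intro x
    rw [if_neg (show ¬ ((x : ℕ) + l < l) by omega)]
    have he : (x : ℕ) + l - l = (x : ℕ) := by omega
    rw [he]

lemma qf_smul_one (c : ℝ) (v : Evec m) :
    qf (c • (1 : Matrix (Fin m) (Fin m) ℝ)) v = c * ‖v‖ ^ 2 := by
  rw [qf, qfphi, qfphi, smul_mulVec, one_mulVec, smul_mulVec, one_mulVec,
    dotProduct_smul, dotProduct_smul, smul_eq_mul, smul_eq_mul]
  rw [EuclideanSpace.norm_eq, Real.sq_sqrt (Finset.sum_nonneg fun a _ => by positivity)]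
  rw [← mul_add]
  congr 1
  show (∑ a, Complex.reLm (v a) * Complex.reLm (v a))
      + ∑ a, Complex.imLm (v a) * Complex.imLm (v a) = _
  rw [← Finset.sum_add_distrib]
  refine Finset.sum_congr rfl fun a _ => ?_
  show (v a).re * (v a).re + (v a).im * (v a).im = ‖v a‖ ^ 2
  rw [Complex.sq_norm, Complex.normSq_apply]

lemma qf_one (v : Evec m) : qf (1 : Matrix (Fin m) (Fin m) ℝ) v = ‖v‖ ^ 2 := by
  have h := qf_smul_one 1 v
  rwa [one_smul, one_mul] at h

lemma qf_neg_one (v : Evec m) : qf (-1 : Matrix (Fin m) (Fin m) ℝ) v = -(‖v‖ ^ 2) := by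
  have h := qf_smul_one (-1) v
  rwa [neg_smul, one_smul, neg_one_mul] at h

lemma sqrt_ofreal_sq {c : ℝ} (hc : 0 ≤ c) :
    (ENNReal.ofReal (c ^ 2)) ^ (1/2 : ℝ) = ENNReal.ofReal c := by
  rw [ENNReal.ofReal_pow hc, ← ENNReal.rpow_natCast (ENNReal.ofReal c) 2, ← ENNReal.rpow_mul]
  norm_num

end Enorm

/-! ### The main branch argument -/

lemma branch_ineq {n m : ℕ}
    (A : Matrix (Fin n) (Fin n) ℝ) (B : Matrix (Fin n) (Fin m) ℝ)
    (C : Matrix (Fin m) (Fin n) ℝ) (D : Matrix (Fin m) (Fin m) ℝ)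
    (l : ℕ) (Amats Bmats : Fin l → Matrix (Fin m) (Fin m) ℝ)
    (hdiff : ∀ (x : ℕ → Evec n) (uc yc : ℕ → Evec m),
      (∀ k, x (k + 1) = act A (x k) + act B (uc k)) →
      (∀ k, yc k = act C (x k) + act D (uc k)) →
      ∀ k, l ≤ k →
        yc k = -(∑ i : Fin l, act (Amats i) (yc (k - l + (i : ℕ))))
          + act D (uc k) + ∑ i : Fin l, act (Bmats i) (uc (k - l + (i : ℕ))))
    (P : Matrix (rindex l m) (rindex l m) ℝ) (Λ Ψ : Matrix (Fin m) (Fin m) ℝ)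
    (μ : ℝ) (hμ : 0 ≤ μ)
    (Ninv : Matrix ((rindex l m ⊕ Fin m) ⊕ Fin m) ((rindex l m ⊕ Fin m) ⊕ Fin m) ℝ)
    (hlmi : IsNegSemidef ((Gmat l m)ᵀ * PhiMat P Λ Ψ * Gmat l m - μ • Ninv))
    (hker : ∀ z, (Fmat l Amats Bmats D) *ᵥ z = 0 → z ⬝ᵥ Ninv *ᵥ z ≤ 0)
    (c d : ℝ) (hΛ : ∀ vv : Evec m, qf Λ vv = c * ‖vv‖ ^ 2)
    (hΨ : ∀ vv : Evec m, qf Ψ vv = d * ‖vv‖ ^ 2)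
    (u₀ : ℕ → Evec m) (henu : enorm2 u₀ ≠ ⊤) (heny : enorm2 (output A B C D u₀) ≠ ⊤) :
    Summable (fun k => ‖(fun j => if j < l then 0 else u₀ (j - l)) k‖ ^ 2)
    ∧ Summable (fun k => ‖output A B C D (fun j => if j < l then 0 else u₀ (j - l)) k‖ ^ 2)
    ∧ c * (∑' k, ‖(fun j => if j < l then 0 else u₀ (j - l)) k‖ ^ 2)
        + d * (∑' k, ‖output A B C D (fun j => if j < l then 0 else u₀ (j - l)) k‖ ^ 2)
      ≤ 0 := by
  set u' : ℕ → Evec m := fun j => if j < l then 0 else u₀ (j - l) with hu'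
  set y' : ℕ → Evec m := output A B C D u' with hy'
  have hyfun : y' = fun k => if k < l then 0 else output A B C D u₀ (k - l) :=
    funext fun k => output_shift A B C D l u₀ k
  have henu' : enorm2 u' = enorm2 u₀ := by rw [hu']; exact enorm2_shift u₀ l
  have heny' : enorm2 y' = enorm2 (output A B C D u₀) := by
    rw [hyfun]
    exact enorm2_shift (output A B C D u₀) l
  have hsu : Summable fun k => ‖u' k‖ ^ 2 :=
    (enorm2_ne_top_iff u').mp (by rw [henu']; exact henu)
  have hsy : Summable fun k => ‖y' k‖ ^ 2 :=
    (enorm2_ne_top_iff y').mp (by rw [heny']; exact heny)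
  refine ⟨hsu, hsy, ?_⟩
  have hnormtend : ∀ (f : ℕ → Evec m), Summable (fun k => ‖f k‖ ^ 2) →
      Tendsto (fun k => ‖f k‖) atTop (𝓝 0) := by
    intro f hf
    have h1 := hf.tendsto_atTop_zero
    have h2 := (Real.continuous_sqrt.tendsto 0).comp h1
    rw [Real.sqrt_zero] at h2
    refine h2.congr fun k => ?_
    exact Real.sqrt_sq (norm_nonneg _)
  have hun := hnormtend u' hsu
  have hyn := hnormtend y' hsy
  have hzero : ∀ k, k < l → u' k = 0 := fun k hk => if_pos hk
  have hzeroy : ∀ k, k < l → y' k = 0 := fun k hk => by rw [hyfun]; exact if_pos hk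
  have hrel := output_hdiff A B C D l Amats Bmats hdiff u'
  rw [← hy'] at hrel
  obtain ⟨W, hW0, hWb⟩ := key_bound l m Amats Bmats D P Λ Ψ μ hμ Ninv hlmi hker u' y'
    hzero hzeroy hrel hun hyn
  have hsum_eq : ∀ K : ℕ, (∑ k ∈ Finset.range K, (qf Λ (u' k) + qf Ψ (y' k)))
      = c * (∑ k ∈ Finset.range K, ‖u' k‖ ^ 2) + d * ∑ k ∈ Finset.range K, ‖y' k‖ ^ 2 := by
    intro K
    simp only [hΛ, hΨ]
    rw [Finset.sum_add_distrib, ← Finset.mul_sum, ← Finset.mul_sum]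
  have hlhs : Tendsto (fun K => c * (∑ k ∈ Finset.range K, ‖u' k‖ ^ 2)
        + d * ∑ k ∈ Finset.range K, ‖y' k‖ ^ 2) atTop
      (𝓝 (c * (∑' k, ‖u' k‖ ^ 2) + d * ∑' k, ‖y' k‖ ^ 2)) :=
    (hsu.hasSum.tendsto_sum_nat.const_mul c).add (hsy.hasSum.tendsto_sum_nat.const_mul d)
  refine le_of_tendsto_of_tendsto hlhs hW0 ?_
  filter_upwards [Filter.eventually_ge_atTop l] with K hK
  rw [← hsum_eq K]
  exact hWb K hK
/-- Robust data-driven bounds on the gains of the ℓ₂ operator `T` from noisy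
data, with symmetric (not necessarily PSD) storage matrix P. -/
theorem stmt17 {n m mv : ℕ} (hn : 1 ≤ n) (hm : 1 ≤ m) (hmv : 1 ≤ mv)
    (A : Matrix (Fin n) (Fin n) ℝ) (B : Matrix (Fin n) (Fin m) ℝ)
    (C : Matrix (Fin m) (Fin n) ℝ) (D : Matrix (Fin m) (Fin m) ℝ)
    (l N : ℕ) (hl : 1 ≤ l) (hN : 1 ≤ N) (hlag : lag A C ≤ l)
    (Amats Bmats : Fin l → Matrix (Fin m) (Fin m) ℝ)
    -- the true system admits the difference-operator representation
    -- y_k = −A_l y_{k-1} − ⋯ − A_1 y_{k-l} + D u_k + B_l u_{k-1} + ⋯ + B_1 u_{k-l}: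
    (hdiff : ∀ (x : ℕ → Evec n) (uc yc : ℕ → Evec m),
      (∀ k, x (k + 1) = act A (x k) + act B (uc k)) →
      (∀ k, yc k = act C (x k) + act D (uc k)) →
      ∀ k, l ≤ k →
        yc k = -(∑ i : Fin l, act (Amats i) (yc (k - l + (i : ℕ))))
          + act D (uc k) + ∑ i : Fin l, act (Bmats i) (uc (k - l + (i : ℕ))))
    (Bv : Matrix (Fin m) (Fin mv) ℝ)
    (Q : Matrix (Fin (N - l)) (Fin (N - l)) ℝ) (S : Matrix (Fin (N - l)) (Fin mv) ℝ)
    (R : Matrix (Fin mv) (Fin mv) ℝ) (hQ : IsNegDef Q) (hR : R.IsSymm)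
    (u y : ℕ → Fin m → ℝ) (v : ℕ → Fin mv → ℝ)
    -- the measured data is generated by the true system corrupted by the noise v:
    (hdata : ∀ k, l ≤ k → k < N →
      y k = -(∑ i : Fin l, (Amats i).mulVec (y (k - l + (i : ℕ))))
        + D.mulVec (u k) + (∑ i : Fin l, (Bmats i).mulVec (u (k - l + (i : ℕ))))
        + Bv.mulVec (v k))
    -- the noise matrix V* = (v_l ⋯ v_{N-1}) belongs to 𝒱:
    (hV : inNoiseSet Q S R (Matrix.of fun a (j : Fin (N - l)) => v (l + (j : ℕ)) a))
    (hinvQSR : IsUnit (QSRbar l N u y Q S R Bv).det)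
    (γ ζ : ℝ) (hγ : 0 ≤ γ) :
    ((∃ (P : Matrix (rindex l m) (rindex l m) ℝ) (μ : ℝ), P.IsSymm ∧ 0 ≤ μ ∧
        IsNegSemidef
          ((Gmat l m)ᵀ * PhiMat P ((-(γ ^ 2)) • (1 : Matrix (Fin m) (Fin m) ℝ)) 1 * Gmat l m
            - μ • (QSRbar l N u y Q S R Bv)⁻¹)) →
      maxGain (domInf A B C D) (output A B C D) ≤ ENNReal.ofReal γ) ∧
    ((∃ (P : Matrix (rindex l m) (rindex l m) ℝ) (μ : ℝ), P.IsSymm ∧ 0 ≤ μ ∧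
        IsNegSemidef
          ((Gmat l m)ᵀ * PhiMat P ((ζ ^ 2) • (1 : Matrix (Fin m) (Fin m) ℝ)) (-1) * Gmat l m
            - μ • (QSRbar l N u y Q S R Bv)⁻¹)) →
      ENNReal.ofReal ζ ≤ minGain (domInf A B C D) (output A B C D)) := by
  have hker : ∀ z, (Fmat l Amats Bmats D) *ᵥ z = 0 →
      z ⬝ᵥ (QSRbar l N u y Q S R Bv)⁻¹ *ᵥ z ≤ 0 :=
    kerF_neg l N Amats Bmats D Bv Q S R u y v hQ hR hdata hV hinvQSR
  constructor
  · rintro ⟨P, μ, _hP, hμ, hlmi⟩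
    refine iSup₂_le fun u₀ hu₀ => ?_
    obtain ⟨hdom, hne⟩ := hu₀
    obtain ⟨henu, heny⟩ := hdom
    obtain ⟨hsu, hsy, hineq⟩ := branch_ineq A B C D l Amats Bmats hdiff P
      ((-(γ ^ 2)) • 1) 1 μ hμ ((QSRbar l N u y Q S R Bv)⁻¹) hlmi hker (-(γ ^ 2)) 1
      (fun vv => qf_smul_one _ vv) (fun vv => by rw [qf_one, one_mul]) u₀ henu heny
    set u' : ℕ → Evec m := fun j => if j < l then 0 else u₀ (j - l) with hu'
    have henu' : enorm2 u' = enorm2 u₀ := by rw [hu']; exact enorm2_shift u₀ l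
    have hyfun : output A B C D u' = fun k => if k < l then 0 else output A B C D u₀ (k - l) :=
      funext fun k => output_shift A B C D l u₀ k
    have heny' : enorm2 (output A B C D u') = enorm2 (output A B C D u₀) := by
      rw [hyfun]
      exact enorm2_shift (output A B C D u₀) l
    rw [← heny', ← henu', enorm2_eq_ofReal _ hsy, enorm2_eq_ofReal _ hsu]
    refine ENNReal.div_le_of_le_mul ?_
    have hty : (∑' k, ‖output A B C D u' k‖ ^ 2) ≤ γ ^ 2 * ∑' k, ‖u' k‖ ^ 2 := by
      linarith [hineq]
    calc (ENNReal.ofReal (∑' k, ‖output A B C D u' k‖ ^ 2)) ^ (1/2 : ℝ)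
        ≤ (ENNReal.ofReal (γ ^ 2 * ∑' k, ‖u' k‖ ^ 2)) ^ (1/2 : ℝ) :=
          ENNReal.rpow_le_rpow (ENNReal.ofReal_le_ofReal hty) (by norm_num)
      _ = ((ENNReal.ofReal (γ ^ 2)) * ENNReal.ofReal (∑' k, ‖u' k‖ ^ 2)) ^ (1/2 : ℝ) := by
          rw [ENNReal.ofReal_mul (by positivity)]
      _ = (ENNReal.ofReal (γ ^ 2)) ^ (1/2 : ℝ)
            * (ENNReal.ofReal (∑' k, ‖u' k‖ ^ 2)) ^ (1/2 : ℝ) :=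
          ENNReal.mul_rpow_of_nonneg _ _ (by norm_num)
      _ = ENNReal.ofReal γ * (ENNReal.ofReal (∑' k, ‖u' k‖ ^ 2)) ^ (1/2 : ℝ) := by
          rw [sqrt_ofreal_sq hγ]
  · rintro ⟨P, μ, _hP, hμ, hlmi⟩
    refine le_iInf₂ fun u₀ hu₀ => ?_
    obtain ⟨hdom, hne⟩ := hu₀
    obtain ⟨henu, heny⟩ := hdom
    rcases le_or_gt ζ 0 with hz | hz
    · rw [ENNReal.ofReal_of_nonpos hz]
      exact zero_le
    obtain ⟨hsu, hsy, hineq⟩ := branch_ineq A B C D l Amats Bmats hdiff P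
      ((ζ ^ 2) • 1) (-1) μ hμ ((QSRbar l N u y Q S R Bv)⁻¹) hlmi hker (ζ ^ 2) (-1)
      (fun vv => qf_smul_one _ vv) (fun vv => by rw [qf_neg_one]; ring) u₀ henu heny
    set u' : ℕ → Evec m := fun j => if j < l then 0 else u₀ (j - l) with hu'
    have henu' : enorm2 u' = enorm2 u₀ := by rw [hu']; exact enorm2_shift u₀ l
    have hyfun : output A B C D u' = fun k => if k < l then 0 else output A B C D u₀ (k - l) :=
      funext fun k => output_shift A B C D l u₀ k
    have heny' : enorm2 (output A B C D u') = enorm2 (output A B C D u₀) := by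
      rw [hyfun]
      exact enorm2_shift (output A B C D u₀) l
    have hu'ne : u' ≠ 0 := by
      intro h
      apply hne
      funext k
      have h2 := congrFun h (k + l)
      have h3 : u' (k + l) = u₀ k := by
        rw [hu']
        show (if k + l < l then (0 : Evec m) else u₀ (k + l - l)) = u₀ k
        rw [if_neg (show ¬ (k + l < l) by omega)]
        have he : k + l - l = k := by omega
        rw [he]
      rw [h3] at h2
      exact h2
    have h0 : enorm2 u' ≠ 0 := enorm2_ne_zero u' hu'ne
    have hT : enorm2 u' ≠ ⊤ := by rw [henu']; exact henu
    rw [← heny', ← henu', enorm2_eq_ofReal _ hsy, enorm2_eq_ofReal _ hsu]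
    rw [ENNReal.le_div_iff_mul_le
      (Or.inl (by rw [← enorm2_eq_ofReal u' hsu]; exact h0))
      (Or.inl (by rw [← enorm2_eq_ofReal u' hsu]; exact hT))]
    have hty : ζ ^ 2 * (∑' k, ‖u' k‖ ^ 2) ≤ ∑' k, ‖output A B C D u' k‖ ^ 2 := by
      linarith [hineq]
    calc ENNReal.ofReal ζ * (ENNReal.ofReal (∑' k, ‖u' k‖ ^ 2)) ^ (1/2 : ℝ)
        = (ENNReal.ofReal (ζ ^ 2)) ^ (1/2 : ℝ)
            * (ENNReal.ofReal (∑' k, ‖u' k‖ ^ 2)) ^ (1/2 : ℝ) := by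
          rw [sqrt_ofreal_sq hz.le]
      _ = (ENNReal.ofReal (ζ ^ 2 * ∑' k, ‖u' k‖ ^ 2)) ^ (1/2 : ℝ) := by
          rw [← ENNReal.mul_rpow_of_nonneg _ _ (by norm_num : (0:ℝ) ≤ 1/2),
            ← ENNReal.ofReal_mul (by positivity)]
      _ ≤ (ENNReal.ofReal (∑' k, ‖output A B C D u' k‖ ^ 2)) ^ (1/2 : ℝ) :=
          ENNReal.rpow_le_rpow (ENNReal.ofReal_le_ofReal hty) (by norm_num)
end
end
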